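/- arXiv:1008.5218 — 7 statements merged into one kernel-verified Lean document; each statement's English description precedes it below -/
import Mathlib

section
/- Let A be an n×n Hermitian matrix partitioned in 2×2 block form with blocks A11 (size (n−k)×(n−k)), A21^H (upper right), A21, and A22 (size k×k). Suppose λ is an eigenvalue of A with λ ∉ spectrum(A22), and let x = [x1; x2] be a unit eigenvector of A for λ, with x2 ∈ ℂ^k. Then ‖x2‖₂ ≤ ‖A21‖₂ / min_j |λ − λ_j(A22)|, where λ_j(A22) are the eigenvalues of A22 and the norm is the spectral norm. -/
open Matrix

noncomputable def euclNorm {K : Type*} [RCLike K] {I : Type*} [Fintype I] (x : I → K) : ℝ :=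
  Real.sqrt (∑ i, ‖x i‖ ^ 2)

noncomputable def specNorm {K : Type*} [RCLike K] {I J : Type*} [Fintype I] [Fintype J]
    [DecidableEq J] (M : Matrix I J K) : ℝ :=
  ‖LinearMap.toContinuousLinearMap (Matrix.toEuclideanLin M)‖

noncomputable def ithEig {K : Type*} [RCLike K] {I : Type*} [Fintype I] [DecidableEq I]
    {A : Matrix I I K} (hA : A.IsHermitian) (i : Fin (Fintype.card I)) : ℝ :=
  (hA.eigenvalues ∘ (Fintype.equivFin I).symm)
    (Tuple.sort (hA.eigenvalues ∘ (Fintype.equivFin I).symm) i)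

/-- If `T` has an orthonormal eigenbasis with all eigenvalues of norm at least `c`,
then `‖T v‖ ≥ c * ‖v‖`. -/
lemma aux_lower_stmt0 {ι : Type*} [Fintype ι] {E : Type*} [NormedAddCommGroup E]
    [InnerProductSpace ℂ E] (u : OrthonormalBasis ι ℂ E) (T : E →ₗ[ℂ] E)
    (ν : ι → ℂ) (hT : ∀ j, T (u j) = ν j • u j) {c : ℝ} (hc : 0 ≤ c)
    (hν : ∀ j, c ≤ ‖ν j‖) (v : E) : c * ‖v‖ ≤ ‖T v‖ := by
  have hTv : T v = ∑ j, (u.repr v j * ν j) • u j := by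
    conv_lhs => rw [← u.sum_repr v, map_sum]
    simp [hT, smul_smul]
  have hrepr : ∀ i, u.repr (T v) i = ν i * u.repr v i := by
    intro i
    rw [u.repr_apply_apply, hTv, u.orthonormal.inner_right_fintype, mul_comm]
  have h1 : ‖T v‖ = Real.sqrt (∑ i, ‖ν i * u.repr v i‖ ^ 2) := by
    rw [← u.repr.norm_map (T v), EuclideanSpace.norm_eq]
    simp_rw [hrepr]
  have h2 : ‖v‖ = Real.sqrt (∑ i, ‖u.repr v i‖ ^ 2) := by
    rw [← u.repr.norm_map v, EuclideanSpace.norm_eq]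
  rw [h1, h2, ← Real.sqrt_sq hc, ← Real.sqrt_mul (sq_nonneg c), Finset.mul_sum]
  apply Real.sqrt_le_sqrt
  apply Finset.sum_le_sum
  intro i _
  rw [norm_mul, mul_pow]
  gcongr
  exact hν i

set_option maxHeartbeats 1000000 in
lemma aux_eigvec_stmt0 {k : ℕ} (A22 : Matrix (Fin k) (Fin k) ℂ) (hA22 : A22.IsHermitian)
    (lam : ℝ) (j : Fin k) :
    Matrix.toEuclideanLin ((lam : ℂ) • (1 : Matrix (Fin k) (Fin k) ℂ) - A22)
        (hA22.eigenvectorBasis j)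
      = ((lam - hA22.eigenvalues j : ℝ) : ℂ) • hA22.eigenvectorBasis j := by
  have h := hA22.mulVec_eigenvectorBasis j
  apply (WithLp.equiv 2 (Fin k → ℂ)).injective
  funext i
  have hi := congrFun h i
  simp only [Pi.smul_apply] at hi
  show (((lam : ℂ) • (1 : Matrix (Fin k) (Fin k) ℂ) - A22) *ᵥ ⇑(hA22.eigenvectorBasis j)) i
      = ((lam - hA22.eigenvalues j : ℝ) : ℂ) • hA22.eigenvectorBasis j i
  simp only [sub_mulVec, smul_mulVec, one_mulVec, Pi.sub_apply, Pi.smul_apply, hi,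
    Complex.real_smul, smul_eq_mul, WithLp.equiv_apply]
  push_cast
  ring

set_option maxHeartbeats 1000000 in
/-- Lemma 2: eigenvector tail bound for a 2×2 block Hermitian matrix. -/
theorem stmt_0 {m k : ℕ}
    (A11 : Matrix (Fin m) (Fin m) ℂ) (A21 : Matrix (Fin k) (Fin m) ℂ)
    (A22 : Matrix (Fin k) (Fin k) ℂ)
    (hA : (fromBlocks A11 A21ᴴ A21 A22).IsHermitian) (hA22 : A22.IsHermitian)
    (lam : ℝ) (x1 : Fin m → ℂ) (x2 : Fin k → ℂ)
    (heig : (fromBlocks A11 A21ᴴ A21 A22).mulVec (Sum.elim x1 x2)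
      = (lam : ℂ) • Sum.elim x1 x2)
    (hunit : euclNorm (Sum.elim x1 x2) = 1)
    (hsep : ∀ j, lam ≠ hA22.eigenvalues j) :
    euclNorm x2 ≤ specNorm A21 / ⨅ j, |lam - hA22.eigenvalues j| := by
  rcases Nat.eq_zero_or_pos k with hk | hk
  · subst hk
    rw [iInf_of_isEmpty, Real.sInf_empty, div_zero]
    simp [euclNorm]
  have : Nonempty (Fin k) := ⟨⟨0, hk⟩⟩
  have hbdd : BddBelow (Set.range fun j => |lam - hA22.eigenvalues j|) :=
    Set.Finite.bddBelow (Set.finite_range _)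
  have hle : ∀ j, (⨅ j, |lam - hA22.eigenvalues j|) ≤ |lam - hA22.eigenvalues j| :=
    fun j => ciInf_le hbdd j
  have hpos : 0 < ⨅ j, |lam - hA22.eigenvalues j| := by
    obtain ⟨j0, hj0⟩ := Finite.exists_min fun j => |lam - hA22.eigenvalues j|
    have h0 : (0:ℝ) < |lam - hA22.eigenvalues j0| := by
      rw [abs_pos, sub_ne_zero]; exact hsep j0
    exact lt_of_lt_of_le h0 (le_ciInf hj0)
  have hBx : ((lam : ℂ) • (1 : Matrix (Fin k) (Fin k) ℂ) - A22) *ᵥ x2 = A21 *ᵥ x1 := by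
    funext j
    have h := congrFun heig (Sum.inr j)
    simp only [fromBlocks_mulVec, Sum.elim_inr, Pi.add_apply, Pi.smul_apply,
      Sum.elim_comp_inl, Sum.elim_comp_inr] at h
    simp only [sub_mulVec, smul_mulVec, one_mulVec, Pi.sub_apply, Pi.smul_apply]
    linear_combination -h
  have hnorm : ∀ {l : ℕ} (y : Fin l → ℂ),
      euclNorm y = ‖(WithLp.equiv 2 (Fin l → ℂ)).symm y‖ := by
    intro l y
    rw [EuclideanSpace.norm_eq]
    rfl
  have hlow : (⨅ j, |lam - hA22.eigenvalues j|) * euclNorm x2 ≤ euclNorm (A21 *ᵥ x1) := by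
    rw [hnorm x2, hnorm (A21 *ᵥ x1), ← hBx]
    have h := aux_lower_stmt0 hA22.eigenvectorBasis
      (Matrix.toEuclideanLin ((lam : ℂ) • (1 : Matrix (Fin k) (Fin k) ℂ) - A22))
      (fun j => ((lam - hA22.eigenvalues j : ℝ) : ℂ))
      (fun j => aux_eigvec_stmt0 A22 hA22 lam j) hpos.le
      (fun j => by rw [Complex.norm_real]; exact hle j)
      ((WithLp.equiv 2 (Fin k → ℂ)).symm x2)
    simp only [WithLp.equiv_symm_apply, toEuclideanLin_apply_piLp_toLp] at h ⊢; exact h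
  have hx1 : euclNorm x1 ≤ 1 := by
    have hsum : ∑ i, ‖x1 i‖ ^ 2 + ∑ j, ‖x2 j‖ ^ 2 = 1 := by
      have h1 : euclNorm (Sum.elim x1 x2) ^ 2 = 1 := by rw [hunit]; norm_num
      unfold euclNorm at h1
      rw [Real.sq_sqrt (Finset.sum_nonneg fun i _ => sq_nonneg _),
        Fintype.sum_sum_type] at h1
      simpa using h1
    unfold euclNorm
    rw [← Real.sqrt_one]
    apply Real.sqrt_le_sqrt
    nlinarith [Finset.sum_nonneg (fun j (_ : j ∈ Finset.univ) => sq_nonneg ‖x2 j‖)]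
  have hup : euclNorm (A21 *ᵥ x1) ≤ specNorm A21 := by
    rw [hnorm (A21 *ᵥ x1)]
    calc ‖(WithLp.equiv 2 (Fin k → ℂ)).symm (A21 *ᵥ x1)‖
        = ‖(LinearMap.toContinuousLinearMap (Matrix.toEuclideanLin A21))
            ((WithLp.equiv 2 (Fin m → ℂ)).symm x1)‖ := rfl
      _ ≤ specNorm A21 * ‖(WithLp.equiv 2 (Fin m → ℂ)).symm x1‖ :=
          ContinuousLinearMap.le_opNorm _ _
      _ ≤ specNorm A21 * 1 := by
          apply mul_le_mul_of_nonneg_left _ (norm_nonneg _)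
          rw [← hnorm x1]; exact hx1
      _ = specNorm A21 := mul_one _
  rw [le_div_iff₀ hpos, mul_comm]
  exact hlow.trans hup
end

section
/- Let A and E be n×n Hermitian matrices partitioned conformally as A = [[A11, A21^H],[A21, A22]] and E = [[E11, E21^H],[E21, E22]], with A22 of size k×k. Fix i, let λ_i be the i-th smallest eigenvalue of A, and suppose min_j |λ_i − λ_j(A22)| > 2‖E‖₂. For t ∈ [0,1], let λ_i(t) be the i-th smallest eigenvalue of A+tE and x(t) = [x1(t); x2(t)] a corresponding unit eigenvector with x2(t) ∈ ℂ^k. Then for all t ∈ [0,1], ‖x2(t)‖₂ ≤ (‖A21‖₂ + ‖E21‖₂) / (min_j |λ_i − λ_j(A22)| − 2‖E‖₂). -/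
open Matrix

set_option linter.unusedSectionVars false
set_option maxHeartbeats 1000000
set_option synthInstance.maxHeartbeats 400000
section Aux
open Submodule
variable {I J : Type*} [Fintype I] [Fintype J] [DecidableEq I] [DecidableEq J]

lemma euclNorm_eq_norm (x : I → ℂ) :
    euclNorm x = ‖(WithLp.equiv 2 (I → ℂ)).symm x‖ := by
  rw [EuclideanSpace.norm_eq, euclNorm]
  rfl

lemma euclNorm_nonneg (x : I → ℂ) : 0 ≤ euclNorm x := Real.sqrt_nonneg _

lemma specNorm_nonneg (M : Matrix I J ℂ) : 0 ≤ specNorm M := norm_nonneg _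

lemma euclNorm_mulVec_le (M : Matrix I J ℂ) (x : J → ℂ) :
    euclNorm (M *ᵥ x) ≤ specNorm M * euclNorm x := by
  rw [euclNorm_eq_norm, euclNorm_eq_norm, specNorm]
  have := (LinearMap.toContinuousLinearMap (Matrix.toEuclideanLin M)).le_opNorm
    ((WithLp.equiv 2 (J → ℂ)).symm x)
  simpa [Matrix.toEuclideanLin_apply_piLp_toLp] using this

lemma euclNorm_add_le (x y : I → ℂ) : euclNorm (x + y) ≤ euclNorm x + euclNorm y := by
  simp only [euclNorm_eq_norm]
  rw [show (WithLp.equiv 2 (I → ℂ)).symm (x + y)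
      = (WithLp.equiv 2 (I → ℂ)).symm x + (WithLp.equiv 2 (I → ℂ)).symm y from rfl]
  exact norm_add_le _ _

lemma euclNorm_sub_le (x y : I → ℂ) : euclNorm (x - y) ≤ euclNorm x + euclNorm y := by
  simp only [euclNorm_eq_norm]
  rw [show (WithLp.equiv 2 (I → ℂ)).symm (x - y)
      = (WithLp.equiv 2 (I → ℂ)).symm x - (WithLp.equiv 2 (I → ℂ)).symm y from rfl]
  exact norm_sub_le _ _

lemma euclNorm_real_smul (t : ℝ) (x : I → ℂ) : euclNorm (t • x) = |t| * euclNorm x := by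
  simp only [euclNorm_eq_norm]
  rw [show (WithLp.equiv 2 (I → ℂ)).symm (t • x)
      = t • (WithLp.equiv 2 (I → ℂ)).symm x from rfl]
  rw [norm_smul, Real.norm_eq_abs]

lemma sq_euclNorm_elim (a : I → ℂ) (b : J → ℂ) :
    euclNorm (Sum.elim a b) ^ 2 = euclNorm a ^ 2 + euclNorm b ^ 2 := by
  simp only [euclNorm]
  rw [Real.sq_sqrt (by positivity), Real.sq_sqrt (by positivity), Real.sq_sqrt (by positivity)]
  · rw [Fintype.sum_sum_type]; rfl

lemma euclNorm_elim_left (a : I → ℂ) (b : J → ℂ) : euclNorm a ≤ euclNorm (Sum.elim a b) := by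
  have h := sq_euclNorm_elim a b
  nlinarith [euclNorm_nonneg a, euclNorm_nonneg b, euclNorm_nonneg (Sum.elim a b), sq_nonneg (euclNorm b)]

lemma euclNorm_elim_right (a : I → ℂ) (b : J → ℂ) : euclNorm b ≤ euclNorm (Sum.elim a b) := by
  have h := sq_euclNorm_elim a b
  nlinarith [euclNorm_nonneg a, euclNorm_nonneg b, euclNorm_nonneg (Sum.elim a b)]

lemma euclNorm_elim_zero_left (b : J → ℂ) : euclNorm (Sum.elim (0 : I → ℂ) b) = euclNorm b := by
  have h := sq_euclNorm_elim (0 : I → ℂ) b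
  have h0 : euclNorm (0 : I → ℂ) = 0 := by simp [euclNorm]
  rw [h0] at h
  nlinarith [euclNorm_nonneg b, euclNorm_nonneg (Sum.elim (0 : I → ℂ) b)]
open Matrix Submodule

variable {I : Type*} [Fintype I] [DecidableEq I]

lemma toEuclideanLin_eigenvectorBasis {B : Matrix I I ℂ} (hB : B.IsHermitian) (j : I) :
    Matrix.toEuclideanLin B (hB.eigenvectorBasis j) =
      ((hB.eigenvalues j : ℝ) : ℂ) • hB.eigenvectorBasis j := by
  have h := hB.mulVec_eigenvectorBasis j
  apply (WithLp.equiv 2 (I → ℂ)).injective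
  rw [show (WithLp.equiv 2 (I → ℂ)) (Matrix.toEuclideanLin B (hB.eigenvectorBasis j))
      = B *ᵥ (hB.eigenvectorBasis j).ofLp from rfl]
  ext l
  have h2 := congrFun h l
  simp only [Pi.smul_apply] at h2
  rw [show (WithLp.equiv 2 (I → ℂ)) (((hB.eigenvalues j : ℝ) : ℂ) • hB.eigenvectorBasis j)
      = ((hB.eigenvalues j : ℝ) : ℂ) • (WithLp.equiv 2 (I → ℂ)) (hB.eigenvectorBasis j) from rfl]
  rw [show (WithLp.equiv 2 (I → ℂ)) (hB.eigenvectorBasis j) = ⇑(hB.eigenvectorBasis j) from rfl]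
  simp only [Pi.smul_apply]
  rw [h2]
  simp [RCLike.real_smul_eq_coe_smul (K := ℂ)]

lemma rayleigh_eq (T : EuclideanSpace ℂ I →ₗ[ℂ] EuclideanSpace ℂ I)
    (u : OrthonormalBasis I ℂ (EuclideanSpace ℂ I)) (μ : I → ℝ)
    (hT : ∀ j, T (u j) = ((μ j : ℝ) : ℂ) • u j) (v : EuclideanSpace ℂ I) :
    RCLike.re (inner ℂ v (T v) : ℂ) = ∑ j, μ j * ‖u.repr v j‖ ^ 2 := by
  have hv : T v = ∑ j, (u.repr v j * (μ j : ℂ)) • u j := by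
    conv_lhs => rw [← u.sum_repr v]
    rw [map_sum]
    refine Finset.sum_congr rfl fun j _ => ?_
    rw [T.map_smul, hT j, smul_smul]
  rw [hv, inner_sum]
  have key : ∀ j, (inner ℂ v ((u.repr v j * (μ j : ℂ)) • u j) : ℂ)
      = ((μ j * ‖u.repr v j‖ ^ 2 : ℝ) : ℂ) := by
    intro j
    rw [inner_smul_right]
    have h1 : (inner ℂ v (u j) : ℂ) = starRingEnd ℂ (u.repr v j) := by
      rw [OrthonormalBasis.repr_apply_apply u v j]
      exact (inner_conj_symm _ _).symm
    rw [h1, show u.repr v j * (μ j : ℂ) * starRingEnd ℂ (u.repr v j)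
        = (μ j : ℂ) * (u.repr v j * starRingEnd ℂ (u.repr v j)) by ring,
      RCLike.mul_conj, Complex.ofReal_mul, Complex.ofReal_pow]
    rfl
  rw [Fintype.sum_congr _ _ key, ← Complex.ofReal_sum]
  exact RCLike.ofReal_re _

lemma norm_sq_eq_sum_repr (u : OrthonormalBasis I ℂ (EuclideanSpace ℂ I))
    (v : EuclideanSpace ℂ I) : ‖v‖ ^ 2 = ∑ j, ‖u.repr v j‖ ^ 2 := by
  rw [← u.repr.norm_map v, EuclideanSpace.norm_eq, Real.sq_sqrt (by positivity)]

variable {I : Type*} [Fintype I] [DecidableEq I]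

lemma repr_eq_zero_of_not_mem (u : OrthonormalBasis I ℂ (EuclideanSpace ℂ I)) (S : Set I)
    {v : EuclideanSpace ℂ I} (hv : v ∈ Submodule.span ℂ (u '' S)) {j : I} (hj : j ∉ S) :
    u.repr v j = 0 := by
  rw [OrthonormalBasis.repr_apply_apply]
  induction hv using Submodule.span_induction with
  | mem x hx =>
    obtain ⟨l, hl, rfl⟩ := hx
    exact u.orthonormal.2 (fun h : j = l => hj (h ▸ hl))
  | zero => simp
  | add x y _ _ hx hy => rw [inner_add_right, hx, hy, add_zero]
  | smul a x _ hx => rw [inner_smul_right, hx, mul_zero]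

lemma finrank_span_orthonormal_image (u : OrthonormalBasis I ℂ (EuclideanSpace ℂ I))
    (S : Finset I) :
    Module.finrank ℂ (Submodule.span ℂ (u '' (S : Set I))) = S.card := by
  have li : LinearIndependent ℂ (fun s : (S : Set I) => u s) :=
    u.orthonormal.linearIndependent.comp _ Subtype.val_injective
  have h := finrank_span_eq_card li
  rw [show Set.range (fun s : (S : Set I) => u s) = u '' (S : Set I) by
    rw [← Set.image_eq_range]] at h
  rw [h]
  simp

lemma exists_ne_zero_mem_inf (V W : Submodule ℂ (EuclideanSpace ℂ I))
    (h : Module.finrank ℂ (EuclideanSpace ℂ I) <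
      Module.finrank ℂ V + Module.finrank ℂ W) :
    ∃ v, v ∈ V ⊓ W ∧ v ≠ 0 := by
  have h1 := Submodule.finrank_sup_add_finrank_inf_eq V W
  have h2 := Submodule.finrank_le (V ⊔ W)
  have h3 : 0 < Module.finrank ℂ ↥(V ⊓ W) := by omega
  apply Submodule.exists_mem_ne_zero_of_ne_bot
  intro hbot
  rw [hbot, finrank_bot] at h3
  omega
lemma rayleigh_le_of_mem (T : EuclideanSpace ℂ I →ₗ[ℂ] EuclideanSpace ℂ I)
    (u : OrthonormalBasis I ℂ (EuclideanSpace ℂ I)) (μ : I → ℝ)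
    (hT : ∀ j, T (u j) = ((μ j : ℝ) : ℂ) • u j) (S : Set I) (c : ℝ)
    (hc : ∀ j ∈ S, μ j ≤ c) {v : EuclideanSpace ℂ I}
    (hv : v ∈ Submodule.span ℂ (u '' S)) :
    RCLike.re (inner ℂ v (T v) : ℂ) ≤ c * ‖v‖ ^ 2 := by
  rw [rayleigh_eq T u μ hT v, norm_sq_eq_sum_repr u v, Finset.mul_sum]
  refine Finset.sum_le_sum fun j _ => ?_
  by_cases hj : j ∈ S
  · exact mul_le_mul_of_nonneg_right (hc j hj) (by positivity)
  · rw [repr_eq_zero_of_not_mem u S hv hj]; simp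

lemma rayleigh_ge_of_mem (T : EuclideanSpace ℂ I →ₗ[ℂ] EuclideanSpace ℂ I)
    (u : OrthonormalBasis I ℂ (EuclideanSpace ℂ I)) (μ : I → ℝ)
    (hT : ∀ j, T (u j) = ((μ j : ℝ) : ℂ) • u j) (S : Set I) (c : ℝ)
    (hc : ∀ j ∈ S, c ≤ μ j) {v : EuclideanSpace ℂ I}
    (hv : v ∈ Submodule.span ℂ (u '' S)) :
    c * ‖v‖ ^ 2 ≤ RCLike.re (inner ℂ v (T v) : ℂ) := by
  rw [rayleigh_eq T u μ hT v, norm_sq_eq_sum_repr u v, Finset.mul_sum]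
  refine Finset.sum_le_sum fun j _ => ?_
  by_cases hj : j ∈ S
  · exact mul_le_mul_of_nonneg_right (hc j hj) (by positivity)
  · rw [repr_eq_zero_of_not_mem u S hv hj]; simp

lemma specNorm_neg (M : Matrix I I ℂ) : specNorm (-M) = specNorm M := by
  unfold specNorm
  have h1 : Matrix.toEuclideanLin (-M) = -(Matrix.toEuclideanLin M) :=
    map_neg (Matrix.toEuclideanLin (m := I) (n := I) (𝕜 := ℂ)) M
  rw [h1]
  have h2 : LinearMap.toContinuousLinearMap (-(Matrix.toEuclideanLin M))
      = -(LinearMap.toContinuousLinearMap (Matrix.toEuclideanLin M)) := map_neg _ _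
  rw [h2, norm_neg]

lemma re_inner_le (M : Matrix I I ℂ) (v : EuclideanSpace ℂ I) :
    RCLike.re (inner ℂ v (Matrix.toEuclideanLin M v) : ℂ) ≤ specNorm M * ‖v‖ ^ 2 := by
  have h1 : RCLike.re (inner ℂ v (Matrix.toEuclideanLin M v) : ℂ)
      ≤ ‖(inner ℂ v (Matrix.toEuclideanLin M v) : ℂ)‖ := RCLike.re_le_norm _
  have h2 := norm_inner_le_norm (𝕜 := ℂ) v (Matrix.toEuclideanLin M v)
  have h3 : ‖Matrix.toEuclideanLin M v‖ ≤ specNorm M * ‖v‖ := by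
    have := (LinearMap.toContinuousLinearMap (Matrix.toEuclideanLin M)).le_opNorm v
    simpa [specNorm] using this
  calc RCLike.re (inner ℂ v (Matrix.toEuclideanLin M v) : ℂ)
      ≤ ‖v‖ * ‖Matrix.toEuclideanLin M v‖ := h1.trans h2
    _ ≤ ‖v‖ * (specNorm M * ‖v‖) :=
        mul_le_mul_of_nonneg_left h3 (norm_nonneg _)
    _ = specNorm M * ‖v‖ ^ 2 := by ring

lemma weyl_le {A A' : Matrix I I ℂ} (hA : A.IsHermitian) (hA' : A'.IsHermitian)
    (i : Fin (Fintype.card I)) :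
    ithEig hA' i ≤ ithEig hA i + specNorm (A' - A) := by
  classical
  set e := Fintype.equivFin I with he
  set f : Fin (Fintype.card I) → ℝ := hA.eigenvalues ∘ e.symm with hf
  set f' : Fin (Fintype.card I) → ℝ := hA'.eigenvalues ∘ e.symm with hf'
  set σ := Tuple.sort f with hσ
  set σ' := Tuple.sort f' with hσ'
  set u := hA.eigenvectorBasis with hu
  set u' := hA'.eigenvectorBasis with hu'
  set S : Finset I := (Finset.Iic i).image (fun j => e.symm (σ j)) with hS
  set S' : Finset I := (Finset.Ici i).image (fun j => e.symm (σ' j)) with hS'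
  set V := Submodule.span ℂ (u '' (S : Set I)) with hV
  set V' := Submodule.span ℂ (u' '' (S' : Set I)) with hV'
  have hinj : Function.Injective (fun j => e.symm (σ j)) :=
    fun a b hab => σ.injective (e.symm.injective hab)
  have hinj' : Function.Injective (fun j => e.symm (σ' j)) :=
    fun a b hab => σ'.injective (e.symm.injective hab)
  have hdV : Module.finrank ℂ V = (i : ℕ) + 1 := by
    rw [hV, finrank_span_orthonormal_image, hS, Finset.card_image_of_injective _ hinj,
      Fin.card_Iic]
  have hdV' : Module.finrank ℂ V' = Fintype.card I - (i : ℕ) := by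
    rw [hV', finrank_span_orthonormal_image, hS', Finset.card_image_of_injective _ hinj',
      Fin.card_Ici]
  obtain ⟨v, hvmem, hvne⟩ : ∃ v, v ∈ V ⊓ V' ∧ v ≠ 0 := by
    apply exists_ne_zero_mem_inf
    rw [hdV, hdV', finrank_euclideanSpace]
    have := i.2
    omega
  have hvV : v ∈ V := hvmem.1
  have hvV' : v ∈ V' := hvmem.2
  have hT : ∀ j, Matrix.toEuclideanLin A (u j) = ((hA.eigenvalues j : ℝ) : ℂ) • u j :=
    fun j => toEuclideanLin_eigenvectorBasis hA j
  have hT' : ∀ j, Matrix.toEuclideanLin A' (u' j) = ((hA'.eigenvalues j : ℝ) : ℂ) • u' j :=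
    fun j => toEuclideanLin_eigenvectorBasis hA' j
  have h1 : RCLike.re (inner ℂ v (Matrix.toEuclideanLin A v) : ℂ) ≤ ithEig hA i * ‖v‖ ^ 2 := by
    refine rayleigh_le_of_mem _ u hA.eigenvalues hT (S : Set I) _ ?_ hvV
    intro j hj
    simp only [hS, Finset.coe_image, Set.mem_image, Finset.mem_coe, Finset.mem_Iic] at hj
    obtain ⟨l, hl, rfl⟩ := hj
    exact Tuple.monotone_sort f hl
  have h2 : ithEig hA' i * ‖v‖ ^ 2 ≤ RCLike.re (inner ℂ v (Matrix.toEuclideanLin A' v) : ℂ) := by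
    refine rayleigh_ge_of_mem _ u' hA'.eigenvalues hT' (S' : Set I) _ ?_ hvV'
    intro j hj
    simp only [hS', Finset.coe_image, Set.mem_image, Finset.mem_coe, Finset.mem_Ici] at hj
    obtain ⟨l, hl, rfl⟩ := hj
    exact Tuple.monotone_sort f' hl
  have h3 : RCLike.re (inner ℂ v (Matrix.toEuclideanLin (A' - A) v) : ℂ)
      ≤ specNorm (A' - A) * ‖v‖ ^ 2 := re_inner_le _ v
  have h4 : Matrix.toEuclideanLin (A' - A) v
      = Matrix.toEuclideanLin A' v - Matrix.toEuclideanLin A v := by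
    rw [map_sub]; rfl
  have h5 : RCLike.re (inner ℂ v (Matrix.toEuclideanLin (A' - A) v) : ℂ)
      = RCLike.re (inner ℂ v (Matrix.toEuclideanLin A' v) : ℂ)
        - RCLike.re (inner ℂ v (Matrix.toEuclideanLin A v) : ℂ) := by
    rw [h4, inner_sub_right, map_sub]
  have hvpos : 0 < ‖v‖ ^ 2 := pow_pos (norm_pos_iff.mpr hvne) 2
  have : ithEig hA' i * ‖v‖ ^ 2 ≤ (ithEig hA i + specNorm (A' - A)) * ‖v‖ ^ 2 := by
    nlinarith
  exact le_of_mul_le_mul_right (by linarith [this]) hvpos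

lemma weyl_abs {A A' : Matrix I I ℂ} (hA : A.IsHermitian) (hA' : A'.IsHermitian)
    (i : Fin (Fintype.card I)) :
    |ithEig hA' i - ithEig hA i| ≤ specNorm (A' - A) := by
  rw [abs_sub_le_iff]
  constructor
  · linarith [weyl_le hA hA' i]
  · have := weyl_le hA' hA i
    have hsn : specNorm (A - A') = specNorm (A' - A) := by
      rw [← neg_sub A' A, specNorm_neg]
    rw [hsn] at this
    linarith
lemma iInf_abs_mul_le [Nonempty I] {B : Matrix I I ℂ} (hB : B.IsHermitian) (μ : ℝ) (y : I → ℂ) :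
    (⨅ j, |μ - hB.eigenvalues j|) * euclNorm y ≤ euclNorm (B *ᵥ y - ((μ : ℝ) : ℂ) • y) := by
  set w : EuclideanSpace ℂ I := (WithLp.equiv 2 (I → ℂ)).symm y with hw
  set z : EuclideanSpace ℂ I := Matrix.toEuclideanLin B w - ((μ : ℝ) : ℂ) • w with hz
  have hzy : euclNorm (B *ᵥ y - ((μ : ℝ) : ℂ) • y) = ‖z‖ := by
    rw [euclNorm_eq_norm]; rfl
  have hwy : euclNorm y = ‖w‖ := euclNorm_eq_norm y
  set u := hB.eigenvectorBasis with hu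
  have hsym := (Matrix.isHermitian_iff_isSymmetric.1 hB)
  have hrepr : ∀ j, u.repr z j
      = ((hB.eigenvalues j - μ : ℝ) : ℂ) * u.repr w j := by
    intro j
    have h1 : u.repr z j = u.repr (Matrix.toEuclideanLin B w) j
        - ((μ : ℝ) : ℂ) * u.repr w j := by
      rw [hz, map_sub, LinearIsometryEquiv.map_smul]
      simp [smul_eq_mul]
    have h2 : u.repr (Matrix.toEuclideanLin B w) j
        = ((hB.eigenvalues j : ℝ) : ℂ) * u.repr w j := by
      rw [OrthonormalBasis.repr_apply_apply, OrthonormalBasis.repr_apply_apply,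
        ← hsym (u j) w, toEuclideanLin_eigenvectorBasis hB j, inner_smul_left,
        Complex.conj_ofReal]
    rw [h1, h2]
    push_cast
    ring
  set c : ℝ := ⨅ j, |μ - hB.eigenvalues j| with hc
  have hbdd : BddBelow (Set.range fun j => |μ - hB.eigenvalues j|) :=
    Finite.bddBelow_range _
  have hc0 : 0 ≤ c := le_ciInf fun j => abs_nonneg _
  have hcle : ∀ j, c ≤ |μ - hB.eigenvalues j| := fun j => ciInf_le hbdd j
  have hsq : (c * ‖w‖) ^ 2 ≤ ‖z‖ ^ 2 := by
    rw [norm_sq_eq_sum_repr u z, mul_pow, norm_sq_eq_sum_repr u w, Finset.mul_sum]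
    refine Finset.sum_le_sum fun j _ => ?_
    rw [hrepr j, norm_mul, mul_pow]
    have habs : ‖((hB.eigenvalues j - μ : ℝ) : ℂ)‖ = |μ - hB.eigenvalues j| := by
      rw [Complex.norm_real, Real.norm_eq_abs, abs_sub_comm]
    rw [habs]
    have : c ^ 2 ≤ |μ - hB.eigenvalues j| ^ 2 := pow_le_pow_left₀ hc0 (hcle j) 2
    exact mul_le_mul_of_nonneg_right this (by positivity)
  rw [hzy, hwy]
  nlinarith [norm_nonneg z, mul_nonneg hc0 (norm_nonneg w)]
lemma euclNorm_neg (x : I → ℂ) : euclNorm (-x) = euclNorm x := by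
  simp only [euclNorm_eq_norm]
  rw [show (WithLp.equiv 2 (I → ℂ)).symm (-x) = -((WithLp.equiv 2 (I → ℂ)).symm x) from rfl,
    norm_neg]

lemma specNorm_real_smul (t : ℝ) (M : Matrix I I ℂ) :
    specNorm (t • M) = |t| * specNorm M := by
  have hM : t • M = ((t : ℂ)) • M := by
    ext a b
    simp [Complex.real_smul]
  unfold specNorm
  have h1 : Matrix.toEuclideanLin (t • M) = (t : ℂ) • Matrix.toEuclideanLin M := by
    rw [hM]
    exact _root_.map_smul (Matrix.toEuclideanLin (m := I) (n := I) (𝕜 := ℂ)) _ _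
  rw [h1]
  have h2 : LinearMap.toContinuousLinearMap ((t : ℂ) • Matrix.toEuclideanLin M)
      = (t : ℂ) • LinearMap.toContinuousLinearMap (Matrix.toEuclideanLin M) :=
    _root_.map_smul _ _ _
  rw [h2]
  have h3 := norm_smul (α := ℂ) (t : ℂ)
    (LinearMap.toContinuousLinearMap (Matrix.toEuclideanLin M))
  rw [h3, Complex.norm_real, Real.norm_eq_abs]


end Aux

/-- Eigenvector tail bound along the homotopy A + tE. -/
theorem stmt_1 {m k : ℕ}
    (A11 : Matrix (Fin m) (Fin m) ℂ) (A21 : Matrix (Fin k) (Fin m) ℂ)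
    (A22 : Matrix (Fin k) (Fin k) ℂ)
    (E11 : Matrix (Fin m) (Fin m) ℂ) (E21 : Matrix (Fin k) (Fin m) ℂ)
    (E22 : Matrix (Fin k) (Fin k) ℂ)
    (A : Matrix (Fin m ⊕ Fin k) (Fin m ⊕ Fin k) ℂ) (hAdef : A = fromBlocks A11 A21ᴴ A21 A22)
    (E : Matrix (Fin m ⊕ Fin k) (Fin m ⊕ Fin k) ℂ) (hEdef : E = fromBlocks E11 E21ᴴ E21 E22)
    (hA : A.IsHermitian) (hA22 : A22.IsHermitian)
    (htE : ∀ t : ℝ, (A + t • E).IsHermitian)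
    (i : Fin (Fintype.card (Fin m ⊕ Fin k)))
    (hgap : (⨅ j, |ithEig hA i - hA22.eigenvalues j|) > 2 * specNorm E)
    (x1 : ℝ → (Fin m → ℂ)) (x2 : ℝ → (Fin k → ℂ))
    (heig : ∀ t ∈ Set.Icc (0:ℝ) 1,
      (A + t • E).mulVec (Sum.elim (x1 t) (x2 t))
        = ((ithEig (htE t) i : ℝ) : ℂ) • Sum.elim (x1 t) (x2 t))
    (hunit : ∀ t ∈ Set.Icc (0:ℝ) 1, euclNorm (Sum.elim (x1 t) (x2 t)) = 1) :
    ∀ t ∈ Set.Icc (0:ℝ) 1,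
      euclNorm (x2 t) ≤ (specNorm A21 + specNorm E21) /
        ((⨅ j, |ithEig hA i - hA22.eigenvalues j|) - 2 * specNorm E) := by
  intro t ht
  obtain ⟨ht0, ht1⟩ := ht
  rcases Nat.eq_zero_or_pos k with hk | hk
  · exfalso
    subst hk
    rw [Real.iInf_of_isEmpty] at hgap
    have := specNorm_nonneg E
    linarith
  haveI : Nonempty (Fin k) := ⟨⟨0, hk⟩⟩
  set lam := ithEig (htE t) i with hlam
  set lam0 := ithEig hA i with hlam0
  set g : ℝ := ⨅ j, |lam0 - hA22.eigenvalues j| with hg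
  set nE := specNorm E with hnE
  set nx1 := euclNorm (x1 t) with hnx1
  set nx2 := euclNorm (x2 t) with hnx2
  -- Weyl
  have hW : |lam - lam0| ≤ nE := by
    have h1 := weyl_abs hA (htE t) i
    rw [add_sub_cancel_left, specNorm_real_smul] at h1
    have h2 : |t| * specNorm E ≤ nE := by
      rw [abs_of_nonneg ht0, hnE]
      nlinarith [specNorm_nonneg E]
    exact h1.trans h2
  -- gap transfer
  have hgap2 : g - nE ≤ ⨅ j, |lam - hA22.eigenvalues j| := by
    apply le_ciInf
    intro j
    have h1 : g ≤ |lam0 - hA22.eigenvalues j| :=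
      ciInf_le (Finite.bddBelow_range _) j
    have h2 : |lam0 - hA22.eigenvalues j| ≤ |lam0 - lam| + |lam - hA22.eigenvalues j| :=
      abs_sub_le _ _ _
    have h3 : |lam0 - lam| = |lam - lam0| := abs_sub_comm _ _
    linarith
  -- eigen equation, bottom block
  have hAt : A + t • E = fromBlocks (A11 + t • E11) (A21ᴴ + t • E21ᴴ)
      (A21 + t • E21) (A22 + t • E22) := by
    rw [hAdef, hEdef]
    ext x y
    cases x <;> cases y <;> simp [Matrix.fromBlocks]
  have h := heig t ⟨ht0, ht1⟩
  have hmv : (A + t • E) *ᵥ (Sum.elim (x1 t) (x2 t))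
      = Sum.elim ((A11 + t • E11) *ᵥ x1 t + (A21ᴴ + t • E21ᴴ) *ᵥ x2 t)
        ((A21 + t • E21) *ᵥ x1 t + (A22 + t • E22) *ᵥ x2 t) := by
    rw [hAt, Matrix.fromBlocks_mulVec]
    rfl
  have h2 : (A21 + t • E21) *ᵥ x1 t + (A22 + t • E22) *ᵥ x2 t = ((lam : ℝ) : ℂ) • x2 t := by
    funext p
    have hp := congrFun h (Sum.inr p)
    rw [hmv] at hp
    simpa using hp
  have e1 : (A21 + t • E21) *ᵥ x1 t = A21 *ᵥ x1 t + t • (E21 *ᵥ x1 t) := by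
    rw [Matrix.add_mulVec, Matrix.smul_mulVec]
  have e2 : (A22 + t • E22) *ᵥ x2 t = A22 *ᵥ x2 t + t • (E22 *ᵥ x2 t) := by
    rw [Matrix.add_mulVec, Matrix.smul_mulVec]
  rw [e1, e2] at h2
  have key : A22 *ᵥ x2 t - ((lam : ℝ) : ℂ) • x2 t
      = -(A21 *ᵥ x1 t) - t • (E21 *ᵥ x1 t) - t • (E22 *ᵥ x2 t) := by
    funext p
    have hp := congrFun h2 p
    simp only [Pi.add_apply, Pi.sub_apply, Pi.smul_apply, Pi.neg_apply,
      Complex.real_smul, smul_eq_mul] at hp ⊢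
    linear_combination hp
  -- norm bounds
  have hL : (⨅ j, |lam - hA22.eigenvalues j|) * nx2
      ≤ euclNorm (A22 *ᵥ x2 t - ((lam : ℝ) : ℂ) • x2 t) := iInf_abs_mul_le hA22 lam (x2 t)
  have hpad : euclNorm (E22 *ᵥ x2 t) ≤ nE * nx2 := by
    have hEv : E *ᵥ (Sum.elim (0 : Fin m → ℂ) (x2 t))
        = Sum.elim (E11 *ᵥ (0 : Fin m → ℂ) + E21ᴴ *ᵥ x2 t)
          (E21 *ᵥ (0 : Fin m → ℂ) + E22 *ᵥ x2 t) := by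
      rw [hEdef, Matrix.fromBlocks_mulVec]
      rfl
    have h1 : euclNorm (E22 *ᵥ x2 t)
        ≤ euclNorm (E *ᵥ (Sum.elim (0 : Fin m → ℂ) (x2 t))) := by
      rw [hEv]
      have := euclNorm_elim_right (E11 *ᵥ (0 : Fin m → ℂ) + E21ᴴ *ᵥ x2 t)
        (E21 *ᵥ (0 : Fin m → ℂ) + E22 *ᵥ x2 t)
      simpa [Matrix.mulVec_zero] using this
    have h2 := euclNorm_mulVec_le E (Sum.elim (0 : Fin m → ℂ) (x2 t))
    rw [euclNorm_elim_zero_left] at h2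
    exact h1.trans h2
  have hb1 : euclNorm (A21 *ᵥ x1 t) ≤ specNorm A21 * nx1 := euclNorm_mulVec_le _ _
  have hb2 : euclNorm (E21 *ᵥ x1 t) ≤ specNorm E21 * nx1 := euclNorm_mulVec_le _ _
  have hR : euclNorm (-(A21 *ᵥ x1 t) - t • (E21 *ᵥ x1 t) - t • (E22 *ᵥ x2 t))
      ≤ specNorm A21 * nx1 + t * (specNorm E21 * nx1) + t * (nE * nx2) := by
    have s1 := euclNorm_sub_le (-(A21 *ᵥ x1 t) - t • (E21 *ᵥ x1 t)) (t • (E22 *ᵥ x2 t))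
    have s2 := euclNorm_sub_le (-(A21 *ᵥ x1 t)) (t • (E21 *ᵥ x1 t))
    have s3 := euclNorm_neg (A21 *ᵥ x1 t)
    have s4 : euclNorm (t • (E21 *ᵥ x1 t)) ≤ t * (specNorm E21 * nx1) := by
      rw [euclNorm_real_smul, abs_of_nonneg ht0]
      exact mul_le_mul_of_nonneg_left hb2 ht0
    have s5 : euclNorm (t • (E22 *ᵥ x2 t)) ≤ t * (nE * nx2) := by
      rw [euclNorm_real_smul, abs_of_nonneg ht0]
      exact mul_le_mul_of_nonneg_left hpad ht0
    linarith
  have hnorm_eq : euclNorm (A22 *ᵥ x2 t - ((lam : ℝ) : ℂ) • x2 t)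
      = euclNorm (-(A21 *ᵥ x1 t) - t • (E21 *ᵥ x1 t) - t • (E22 *ᵥ x2 t)) := by rw [key]
  -- unit vector facts
  have hu := hunit t ⟨ht0, ht1⟩
  have hx1le : nx1 ≤ 1 := by
    rw [hnx1, ← hu]; exact euclNorm_elim_left _ _
  have hx2le : nx2 ≤ 1 := by
    rw [hnx2, ← hu]; exact euclNorm_elim_right _ _
  have hx1n := euclNorm_nonneg (x1 t)
  have hx2n := euclNorm_nonneg (x2 t)
  have hA21n := specNorm_nonneg A21
  have hE21n := specNorm_nonneg E21
  have hEn := specNorm_nonneg E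
  -- combine
  have hchain : (g - nE) * nx2 ≤ specNorm A21 * nx1 + t * (specNorm E21 * nx1) + t * (nE * nx2) := by
    have := mul_le_mul_of_nonneg_right hgap2 hx2n
    rw [hnorm_eq] at hL
    linarith
  have hfin : (g - 2 * nE) * nx2 ≤ specNorm A21 + specNorm E21 := by
    nlinarith [mul_nonneg (mul_nonneg (sub_nonneg.mpr ht1) hEn) hx2n,
      mul_nonneg (sub_nonneg.mpr ht1) (mul_nonneg hE21n hx1n),
      mul_nonneg hA21n (sub_nonneg.mpr hx1le),
      mul_nonneg hE21n (sub_nonneg.mpr hx1le),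
      mul_nonneg hEn (mul_nonneg ht0 (sub_nonneg.mpr hx2le))]
  have hpos : 0 < g - 2 * nE := by linarith [hgap]
  rw [le_div_iff₀ hpos]
  nlinarith [hfin]
end

section
/- Let A and Â be Hermitian matrices of the form A = [[A1, 0],[0, A2]] and Â = [[A1, E^H],[E, A2]], where A2 is k×k. If λ_i(A), the i-th smallest eigenvalue of A, is not an eigenvalue of A2, then |λ_i(A) − λ_i(Â)| ≤ ‖E‖₂² / min_j |λ_i(A) − λ_j(A2)|. -/
open Matrix BigOperators Module Submodule

local notation "⟪" x ", " y "⟫" => @inner ℂ _ _ x y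


section Count

variable {I : Type*} [Fintype I] [DecidableEq I]

/-- shifted quadratic form -/
noncomputable def qForm (H : Matrix I I ℂ) (t : ℝ) (x : EuclideanSpace ℂ I) : ℝ :=
  Complex.re ⟪x, Matrix.toEuclideanLin H x⟫ - t * ‖x‖ ^ 2

noncomputable def cnt {H : Matrix I I ℂ} (hH : H.IsHermitian) (t : ℝ) : ℕ :=
  (Finset.univ.filter (fun j => hH.eigenvalues j < t)).card

lemma cnt_congr {H H' : Matrix I I ℂ} (hH : H.IsHermitian) (hH' : H'.IsHermitian)
    (h : H = H') (t : ℝ) : cnt hH t = cnt hH' t := by subst h; rfl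

lemma cnt_mono {H : Matrix I I ℂ} (hH : H.IsHermitian) {t u : ℝ} (h : t ≤ u) :
    cnt hH t ≤ cnt hH u := by
  apply Finset.card_le_card
  intro j hj
  simp only [Finset.mem_filter] at *
  exact ⟨hj.1, lt_of_lt_of_le hj.2 h⟩

lemma conj_mul_re (z : ℂ) : ((starRingEnd ℂ) z * z).re = ‖z‖ ^ 2 := by
  rw [mul_comm, Complex.mul_conj, Complex.ofReal_re, Complex.normSq_eq_norm_sq]

lemma qForm_zero (H : Matrix I I ℂ) (t : ℝ) : qForm H t 0 = 0 := by
  simp [qForm]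

/-- core dimension-counting lemma -/
lemma finrank_add_finrank_le {V : Type*} [AddCommGroup V] [Module ℂ V]
    [FiniteDimensional ℂ V] (q : V → ℝ) (W P : Submodule ℂ V)
    (hW : ∀ x ∈ W, x ≠ 0 → q x < 0) (hP : ∀ x ∈ P, 0 ≤ q x) :
    finrank ℂ W + finrank ℂ P ≤ finrank ℂ V := by
  have hdisj : W ⊓ P = ⊥ := by
    rw [Submodule.eq_bot_iff]
    intro x hx
    by_contra hne
    exact absurd (hP x hx.2) (not_le.mpr (hW x hx.1 hne))
  have := Submodule.finrank_sup_add_finrank_inf_eq W P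
  rw [hdisj, finrank_bot, add_zero] at this
  rw [← this]
  exact Submodule.finrank_le _

variable {H : Matrix I I ℂ} (hH : H.IsHermitian)

lemma toEuclideanLin_eigenvec (j : I) :
    Matrix.toEuclideanLin H (hH.eigenvectorBasis j) =
      (hH.eigenvalues j : ℂ) • hH.eigenvectorBasis j := by
  apply (WithLp.equiv 2 (I → ℂ)).injective
  rw [Matrix.toEuclideanLin_apply]
  simp only [WithLp.equiv_apply, WithLp.ofLp_toLp]
  rw [hH.mulVec_eigenvectorBasis]
  ext i
  simp [Complex.real_smul]

lemma inner_toEuclideanLin_eigenvec (j : I) (x : EuclideanSpace ℂ I) :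
    ⟪hH.eigenvectorBasis j, Matrix.toEuclideanLin H x⟫ =
      (hH.eigenvalues j : ℂ) * ⟪hH.eigenvectorBasis j, x⟫ := by
  have hsym := (Matrix.isHermitian_iff_isSymmetric.mp hH)
  rw [← hsym (hH.eigenvectorBasis j) x, toEuclideanLin_eigenvec hH j, inner_smul_left]
  simp

lemma form_expand (x : EuclideanSpace ℂ I) :
    Complex.re ⟪x, Matrix.toEuclideanLin H x⟫ =
      ∑ j, hH.eigenvalues j * ‖⟪hH.eigenvectorBasis j, x⟫‖ ^ 2 := by
  rw [← OrthonormalBasis.sum_inner_mul_inner hH.eigenvectorBasis x (Matrix.toEuclideanLin H x)]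
  rw [Complex.re_sum]
  apply Finset.sum_congr rfl
  intro j _
  rw [inner_toEuclideanLin_eigenvec hH j x]
  have h1 : ⟪x, hH.eigenvectorBasis j⟫ = starRingEnd ℂ ⟪hH.eigenvectorBasis j, x⟫ :=
    (inner_conj_symm _ _).symm
  rw [h1]
  set z := ⟪hH.eigenvectorBasis j, x⟫
  have : starRingEnd ℂ z * ((hH.eigenvalues j : ℂ) * z) =
      (hH.eigenvalues j : ℂ) * (z * starRingEnd ℂ z) := by ring
  rw [this, Complex.mul_conj]
  rw [← Complex.ofReal_mul]
  rw [Complex.ofReal_re]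
  rw [Complex.normSq_eq_norm_sq]

lemma norm_expand (x : EuclideanSpace ℂ I) :
    ‖x‖ ^ 2 = ∑ j, ‖⟪hH.eigenvectorBasis j, x⟫‖ ^ 2 := by
  have h := OrthonormalBasis.sum_inner_mul_inner hH.eigenvectorBasis x x
  have h2 : Complex.re ⟪x, x⟫ = ‖x‖ ^ 2 := by
    rw [@inner_self_eq_norm_sq_to_K ℂ]; norm_cast
  rw [← h2, ← h, Complex.re_sum]
  apply Finset.sum_congr rfl
  intro j _
  rw [← inner_conj_symm x (hH.eigenvectorBasis j)]
  set z := ⟪hH.eigenvectorBasis j, x⟫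
  exact conj_mul_re z

lemma qForm_eq_sum (t : ℝ) (x : EuclideanSpace ℂ I) :
    qForm H t x = ∑ j, (hH.eigenvalues j - t) * ‖⟪hH.eigenvectorBasis j, x⟫‖ ^ 2 := by
  rw [qForm, form_expand hH, norm_expand hH, Finset.mul_sum, ← Finset.sum_sub_distrib]
  apply Finset.sum_congr rfl
  intro j _
  ring


/-- span of eigenvectors indexed by a finset -/
noncomputable def eigSpan (s : Finset I) : Submodule ℂ (EuclideanSpace ℂ I) :=
  Submodule.span ℂ (hH.eigenvectorBasis '' ↑s)

lemma inner_eq_zero_of_eigSpan {s : Finset I} {j : I} (hj : j ∉ s) {x : EuclideanSpace ℂ I}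
    (hx : x ∈ eigSpan hH s) : ⟪hH.eigenvectorBasis j, x⟫ = 0 := by
  induction hx using Submodule.span_induction with
  | mem y hy =>
    obtain ⟨j', hj', rfl⟩ := hy
    have hne : j ≠ j' := by rintro rfl; exact hj hj'
    have := hH.eigenvectorBasis.orthonormal
    rw [orthonormal_iff_ite] at this
    rw [this j j']
    simp [hne]
  | zero => simp
  | add y z _ _ hy hz => rw [inner_add_right, hy, hz, add_zero]
  | smul c y _ hy => rw [inner_smul_right, hy, mul_zero]

lemma finrank_eigSpan (s : Finset I) : finrank ℂ (eigSpan hH s) = s.card := by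
  have hli : LinearIndependent ℂ (fun j : {j // j ∈ s} => hH.eigenvectorBasis j) :=
    (hH.eigenvectorBasis.orthonormal.linearIndependent).comp _ Subtype.val_injective
  have hrange : Set.range (fun j : {j // j ∈ s} => hH.eigenvectorBasis j) =
      hH.eigenvectorBasis '' ↑s := by
    rw [show (fun j : {j // j ∈ s} => hH.eigenvectorBasis j)
        = hH.eigenvectorBasis ∘ Subtype.val from rfl, Set.range_comp, Subtype.range_val]
  rw [eigSpan, ← hrange, finrank_span_eq_card hli]
  simp [Fintype.card_coe]

lemma qForm_neg_on {t : ℝ} {x : EuclideanSpace ℂ I}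
    (hx : x ∈ eigSpan hH (Finset.univ.filter (fun j => hH.eigenvalues j < t)))
    (hx0 : x ≠ 0) : qForm H t x < 0 := by
  rw [qForm_eq_sum hH]
  have hj0' : ∃ j0, ⟪hH.eigenvectorBasis j0, x⟫ ≠ 0 := by
    by_contra hc
    push_neg at hc
    have hxn : 0 < ‖x‖ ^ 2 := by
      have : ‖x‖ ≠ 0 := norm_ne_zero_iff.mpr hx0
      positivity
    rw [norm_expand hH] at hxn
    have : ∑ j, ‖⟪hH.eigenvectorBasis j, x⟫‖ ^ 2 = 0 := by
      apply Finset.sum_eq_zero; intro j _; rw [hc j]; simp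
    rw [this] at hxn; exact lt_irrefl 0 hxn
  obtain ⟨j0, hj0⟩ := hj0'
  have hj0s : hH.eigenvalues j0 < t := by
    by_contra hc
    exact hj0 (inner_eq_zero_of_eigSpan hH (by simp [hc]) hx)
  have hsum : ∑ j, (hH.eigenvalues j - t) * ‖⟪hH.eigenvectorBasis j, x⟫‖ ^ 2
      < ∑ _j : I, (0:ℝ) := by
    apply Finset.sum_lt_sum
    · intro j _
      by_cases hj : hH.eigenvalues j < t
      · have h1 : hH.eigenvalues j - t ≤ 0 := by linarith
        have h2 : (0:ℝ) ≤ ‖⟪hH.eigenvectorBasis j, x⟫‖ ^ 2 := by positivity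
        exact mul_nonpos_of_nonpos_of_nonneg h1 h2
      · rw [inner_eq_zero_of_eigSpan hH (by simp [hj]) hx]; simp
    · refine ⟨j0, Finset.mem_univ j0, ?_⟩
      apply mul_neg_of_neg_of_pos (by linarith)
      have := norm_pos_iff.mpr hj0
      positivity
  simpa using hsum

lemma qForm_nonneg_on {t : ℝ} {x : EuclideanSpace ℂ I}
    (hx : x ∈ eigSpan hH (Finset.univ.filter (fun j => ¬ hH.eigenvalues j < t))) :
    0 ≤ qForm H t x := by
  rw [qForm_eq_sum hH]
  apply Finset.sum_nonneg
  intro j _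
  by_cases hj : hH.eigenvalues j < t
  · rw [inner_eq_zero_of_eigSpan hH (by simp [hj]) hx]
    simp
  · have : 0 ≤ hH.eigenvalues j - t := by push_neg at hj; linarith
    positivity

lemma finrank_le_cnt {t : ℝ} (W : Submodule ℂ (EuclideanSpace ℂ I))
    (hW : ∀ x ∈ W, x ≠ 0 → qForm H t x < 0) : finrank ℂ W ≤ cnt hH t := by
  have h1 := finrank_add_finrank_le (qForm H t) W
    (eigSpan hH (Finset.univ.filter (fun j => ¬ hH.eigenvalues j < t)))
    hW (fun x hx => qForm_nonneg_on hH hx)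
  rw [finrank_eigSpan, finrank_euclideanSpace] at h1
  have h2 : cnt hH t + (Finset.univ.filter (fun j => ¬ hH.eigenvalues j < t)).card
      = Fintype.card I := by
    rw [cnt, Finset.card_filter_add_card_filter_not, Finset.card_univ]
  omega

lemma cnt_add_finrank_le {t : ℝ} (P : Submodule ℂ (EuclideanSpace ℂ I))
    (hP : ∀ x ∈ P, 0 ≤ qForm H t x) : cnt hH t + finrank ℂ P ≤ Fintype.card I := by
  have h1 := finrank_add_finrank_le (qForm H t)
    (eigSpan hH (Finset.univ.filter (fun j => hH.eigenvalues j < t))) P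
    (fun x hx hx0 => qForm_neg_on hH hx hx0) hP
  rw [finrank_eigSpan, finrank_euclideanSpace] at h1
  exact h1


end Count

section Sorted

lemma card_filter_equiv {α β : Type*} [Fintype α] [Fintype β] [DecidableEq α] [DecidableEq β]
    (e : α ≃ β) (p : β → Prop) [DecidablePred p] :
    (Finset.univ.filter fun a => p (e a)).card = (Finset.univ.filter p).card := by
  rw [← Fintype.card_subtype, ← Fintype.card_subtype]
  exact Fintype.card_congr (e.subtypeEquiv fun a => Iff.rfl)

variable {n : ℕ} {g : Fin n → ℝ}

lemma mono_count_ge (hg : Monotone g) {i : Fin n} {t : ℝ}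
    (h : (Finset.univ.filter (fun j => g j < t)).card ≤ i.val) : t ≤ g i := by
  by_contra h'
  push_neg at h'
  have hsub : Finset.Iic i ⊆ Finset.univ.filter (fun j => g j < t) := by
    intro j hj
    rw [Finset.mem_Iic] at hj
    exact Finset.mem_filter.mpr ⟨Finset.mem_univ j, lt_of_le_of_lt (hg hj) h'⟩
  have := Finset.card_le_card hsub
  rw [Fin.card_Iic] at this
  omega

lemma mono_count_lt (hg : Monotone g) {i : Fin n} {t : ℝ}
    (h : i.val < (Finset.univ.filter (fun j => g j < t)).card) : g i < t := by
  by_contra h'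
  push_neg at h'
  have hsub : Finset.univ.filter (fun j => g j < t) ⊆ Finset.Iio i := by
    intro j hj
    rw [Finset.mem_filter] at hj
    rw [Finset.mem_Iio]
    by_contra hji
    push_neg at hji
    exact absurd (lt_of_lt_of_le hj.2 h') (not_lt.mpr (hg hji))
  have := Finset.card_le_card hsub
  rw [Fin.card_Iio] at this
  omega

lemma mono_count_self (hg : Monotone g) (i : Fin n) :
    (Finset.univ.filter (fun j => g j < g i)).card ≤ i.val := by
  have hsub : Finset.univ.filter (fun j => g j < g i) ⊆ Finset.Iio i := by
    intro j hj
    rw [Finset.mem_filter] at hj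
    rw [Finset.mem_Iio]
    by_contra hji
    push_neg at hji
    exact absurd hj.2 (not_lt.mpr (hg hji))
  have := Finset.card_le_card hsub
  rw [Fin.card_Iio] at this
  omega

lemma mono_count_above (hg : Monotone g) {i : Fin n} {u : ℝ} (h : g i < u) :
    i.val < (Finset.univ.filter (fun j => g j < u)).card := by
  have hsub : Finset.Iic i ⊆ Finset.univ.filter (fun j => g j < u) := by
    intro j hj
    rw [Finset.mem_Iic] at hj
    exact Finset.mem_filter.mpr ⟨Finset.mem_univ j, lt_of_le_of_lt (hg hj) h⟩
  have := Finset.card_le_card hsub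
  rw [Fin.card_Iic] at this
  omega

variable {I : Type*} [Fintype I] [DecidableEq I] {H : Matrix I I ℂ} (hH : H.IsHermitian)

lemma cnt_eq_sorted (t : ℝ) :
    cnt hH t = (Finset.univ.filter (fun j : Fin (Fintype.card I) =>
      ((hH.eigenvalues ∘ (Fintype.equivFin I).symm) ∘
        (Tuple.sort (hH.eigenvalues ∘ (Fintype.equivFin I).symm))) j < t)).card := by
  set f := hH.eigenvalues ∘ (Fintype.equivFin I).symm with hf
  have h1 : cnt hH t = (Finset.univ.filter (fun j : Fin (Fintype.card I) => f j < t)).card := by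
    rw [cnt, ← card_filter_equiv (Fintype.equivFin I).symm (fun x => hH.eigenvalues x < t)]
    rfl
  rw [h1, ← card_filter_equiv (Tuple.sort f) (fun j => f j < t)]
  rfl

lemma ithEig_eq (i : Fin (Fintype.card I)) :
    ithEig hH i = ((hH.eigenvalues ∘ (Fintype.equivFin I).symm) ∘
      (Tuple.sort (hH.eigenvalues ∘ (Fintype.equivFin I).symm))) i := rfl

lemma le_ithEig {t : ℝ} {i : Fin (Fintype.card I)} (h : cnt hH t ≤ i.val) :
    t ≤ ithEig hH i := by
  rw [cnt_eq_sorted hH t] at h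
  rw [ithEig_eq]
  exact mono_count_ge (Tuple.monotone_sort _) h

lemma ithEig_lt {t : ℝ} {i : Fin (Fintype.card I)} (h : i.val < cnt hH t) :
    ithEig hH i < t := by
  rw [cnt_eq_sorted hH t] at h
  rw [ithEig_eq]
  exact mono_count_lt (Tuple.monotone_sort _) h

lemma cnt_ithEig_le (i : Fin (Fintype.card I)) : cnt hH (ithEig hH i) ≤ i.val := by
  rw [cnt_eq_sorted hH, ithEig_eq]
  exact mono_count_self (Tuple.monotone_sort _) i

lemma lt_cnt_of_ithEig_lt {u : ℝ} {i : Fin (Fintype.card I)} (h : ithEig hH i < u) :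
    i.val < cnt hH u := by
  rw [cnt_eq_sorted hH]
  rw [ithEig_eq] at h
  exact mono_count_above (Tuple.monotone_sort _) h

end Sorted

section Blocks

lemma re_inner_self {V : Type*} [NormedAddCommGroup V] [InnerProductSpace ℂ V]
    (z : V) : Complex.re ⟪z, z⟫ = ‖z‖ ^ 2 := by
  rw [@inner_self_eq_norm_sq_to_K ℂ]
  norm_cast

variable {ι₁ ι₂ : Type*} [Fintype ι₁] [DecidableEq ι₁] [Fintype ι₂] [DecidableEq ι₂]

noncomputable def sumE :
    (EuclideanSpace ℂ ι₁ × EuclideanSpace ℂ ι₂) ≃ₗ[ℂ] EuclideanSpace ℂ (ι₁ ⊕ ι₂) :=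
  ((WithLp.linearEquiv 2 ℂ (ι₁ → ℂ)).prodCongr (WithLp.linearEquiv 2 ℂ (ι₂ → ℂ))).trans
    ((LinearEquiv.sumArrowLequivProdArrow ι₁ ι₂ ℂ ℂ).symm.trans
      (WithLp.linearEquiv 2 ℂ (ι₁ ⊕ ι₂ → ℂ)).symm)

lemma sumE_coe (x : EuclideanSpace ℂ ι₁) (y : EuclideanSpace ℂ ι₂) :
    (WithLp.equiv 2 (ι₁ ⊕ ι₂ → ℂ)) (sumE (x, y)) =
      Sum.elim ((WithLp.equiv 2 (ι₁ → ℂ)) x) ((WithLp.equiv 2 (ι₂ → ℂ)) y) := rfl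

lemma sumE_inner (x1 y1 : EuclideanSpace ℂ ι₁) (x2 y2 : EuclideanSpace ℂ ι₂) :
    ⟪sumE (x1, x2), sumE (y1, y2)⟫ = ⟪x1, y1⟫ + ⟪x2, y2⟫ := by
  simp only [PiLp.inner_apply]
  rw [Fintype.sum_sum_type]
  rfl

lemma sumE_norm_sq (x1 : EuclideanSpace ℂ ι₁) (x2 : EuclideanSpace ℂ ι₂) :
    ‖sumE (x1, x2)‖ ^ 2 = ‖x1‖ ^ 2 + ‖x2‖ ^ 2 := by
  rw [← re_inner_self, ← re_inner_self x1, ← re_inner_self x2, sumE_inner, Complex.add_re]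

lemma toEuclideanLin_fromBlocks (A1 : Matrix ι₁ ι₁ ℂ) (B : Matrix ι₁ ι₂ ℂ)
    (C : Matrix ι₂ ι₁ ℂ) (D : Matrix ι₂ ι₂ ℂ) (x : EuclideanSpace ℂ ι₁)
    (y : EuclideanSpace ℂ ι₂) :
    Matrix.toEuclideanLin (fromBlocks A1 B C D) (sumE (x, y)) =
      sumE (Matrix.toEuclideanLin A1 x + Matrix.toEuclideanLin B y,
            Matrix.toEuclideanLin C x + Matrix.toEuclideanLin D y) := by
  apply (WithLp.equiv 2 (ι₁ ⊕ ι₂ → ℂ)).injective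
  simp only [Matrix.toEuclideanLin_apply, WithLp.equiv_apply, WithLp.ofLp_toLp]
  rw [show (WithLp.ofLp (sumE (x, y))) =
      Sum.elim ((WithLp.equiv 2 (ι₁ → ℂ)) x) ((WithLp.equiv 2 (ι₂ → ℂ)) y) from rfl,
    fromBlocks_mulVec]
  rfl

lemma qForm_fromBlocks (A1 : Matrix ι₁ ι₁ ℂ) (A2 : Matrix ι₂ ι₂ ℂ) (E : Matrix ι₂ ι₁ ℂ)
    (t : ℝ) (x : EuclideanSpace ℂ ι₁) (y : EuclideanSpace ℂ ι₂) :
    qForm (fromBlocks A1 Eᴴ E A2) t (sumE (x, y)) =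
      qForm A1 t x + 2 * Complex.re ⟪y, Matrix.toEuclideanLin E x⟫ + qForm A2 t y := by
  rw [qForm, toEuclideanLin_fromBlocks, sumE_inner, sumE_norm_sq]
  rw [inner_add_right, inner_add_right]
  have hadj : ⟪x, Matrix.toEuclideanLin Eᴴ y⟫ = starRingEnd ℂ ⟪y, Matrix.toEuclideanLin E x⟫ := by
    rw [Matrix.toEuclideanLin_conjTranspose_eq_adjoint, LinearMap.adjoint_inner_right,
      ← inner_conj_symm]
  rw [hadj]
  simp only [qForm, Complex.add_re, Complex.conj_re]
  ring


variable {ι₁ ι₂ : Type*} [Fintype ι₁] [DecidableEq ι₁] [Fintype ι₂] [DecidableEq ι₂]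

lemma conj_mul_eq (a : ℂ) : (starRingEnd ℂ) a * a = ((‖a‖ ^ 2 : ℝ) : ℂ) := by
  rw [mul_comm, Complex.mul_conj]
  norm_cast
  rw [Complex.normSq_eq_norm_sq]

section TmapSec

variable {A2 : Matrix ι₂ ι₂ ℂ} (hA2 : A2.IsHermitian) (t : ℝ)

noncomputable def Tmap : EuclideanSpace ℂ ι₂ →ₗ[ℂ] EuclideanSpace ℂ ι₂ :=
  ∑ j, (((hA2.eigenvalues j - t)⁻¹ : ℝ) : ℂ) •
    ((innerSL ℂ (hA2.eigenvectorBasis j)).toLinearMap.smulRight (hA2.eigenvectorBasis j))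

lemma Tmap_apply (u : EuclideanSpace ℂ ι₂) :
    Tmap hA2 t u = ∑ j, (((hA2.eigenvalues j - t)⁻¹ : ℝ) : ℂ) •
      (⟪hA2.eigenvectorBasis j, u⟫ • hA2.eigenvectorBasis j) := by
  rw [Tmap, LinearMap.sum_apply]
  apply Finset.sum_congr rfl
  intro j _
  rw [LinearMap.smul_apply, LinearMap.smulRight_apply]
  rfl

noncomputable def Sval (u : EuclideanSpace ℂ ι₂) : ℝ :=
  ∑ j, (hA2.eigenvalues j - t)⁻¹ * ‖⟪hA2.eigenvectorBasis j, u⟫‖ ^ 2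

lemma Sval_zero : Sval hA2 t 0 = 0 := by
  rw [Sval]
  apply Finset.sum_eq_zero
  intro j _
  rw [inner_zero_right]
  simp

lemma Tmap_solve (hne : ∀ j, hA2.eigenvalues j ≠ t) (u : EuclideanSpace ℂ ι₂) :
    Matrix.toEuclideanLin A2 (Tmap hA2 t u) - (t : ℂ) • Tmap hA2 t u = u := by
  have key : Matrix.toEuclideanLin A2 (Tmap hA2 t u) - (t : ℂ) • Tmap hA2 t u
      = ∑ j, ⟪hA2.eigenvectorBasis j, u⟫ • hA2.eigenvectorBasis j := by
    rw [Tmap_apply, map_sum, Finset.smul_sum, ← Finset.sum_sub_distrib]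
    refine Finset.sum_congr rfl fun j _ => ?_
    rw [_root_.map_smul, _root_.map_smul, toEuclideanLin_eigenvec hA2 j]
    have hcj : (((hA2.eigenvalues j - t)⁻¹ : ℝ) : ℂ) * ((hA2.eigenvalues j : ℂ) - (t : ℂ)) = 1 := by
      have h0 : ((hA2.eigenvalues j - t : ℝ) : ℂ) ≠ 0 := by
        exact_mod_cast sub_ne_zero.mpr (hne j)
      rw [← Complex.ofReal_sub, Complex.ofReal_inv]
      exact inv_mul_cancel₀ h0
    set c := (((hA2.eigenvalues j - t)⁻¹ : ℝ) : ℂ)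
    set a := ⟪hA2.eigenvectorBasis j, u⟫
    set lj := ((hA2.eigenvalues j : ℝ) : ℂ)
    rw [smul_smul, smul_smul, smul_smul, smul_smul, ← sub_smul]
    congr 1
    have hcj' : c * (lj - (t:ℂ)) = 1 := hcj
    linear_combination a * hcj'
  rw [key]
  have h2 := hA2.eigenvectorBasis.sum_repr u
  simp only [OrthonormalBasis.repr_apply_apply] at h2
  exact h2

lemma re_inner_Tmap (u : EuclideanSpace ℂ ι₂) :
    Complex.re ⟪Tmap hA2 t u, u⟫ = Sval hA2 t u := by
  rw [Tmap_apply, sum_inner, Complex.re_sum, Sval]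
  apply Finset.sum_congr rfl
  intro j _
  rw [inner_smul_left, inner_smul_left]
  rw [Complex.conj_ofReal]
  set a := ⟪hA2.eigenvectorBasis j, u⟫
  rw [show (((hA2.eigenvalues j - t)⁻¹ : ℝ) : ℂ) * ((starRingEnd ℂ) a * a)
      = (((hA2.eigenvalues j - t)⁻¹ : ℝ) : ℂ) * ((‖a‖ ^ 2 : ℝ) : ℂ) by rw [conj_mul_eq]]
  rw [← Complex.ofReal_mul, Complex.ofReal_re]

lemma Sval_le {δ : ℝ} (hδ : 0 < δ) (hne : ∀ j, hA2.eigenvalues j ≠ t)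
    (hup : ∀ j, t < hA2.eigenvalues j → δ ≤ hA2.eigenvalues j - t)
    (u : EuclideanSpace ℂ ι₂) : Sval hA2 t u ≤ δ⁻¹ * ‖u‖ ^ 2 := by
  rw [Sval, norm_expand hA2 u, Finset.mul_sum]
  apply Finset.sum_le_sum
  intro j _
  have hn : (0:ℝ) ≤ ‖⟪hA2.eigenvectorBasis j, u⟫‖ ^ 2 := by positivity
  apply mul_le_mul_of_nonneg_right _ hn
  rcases (hne j).lt_or_gt with h | h
  · have : (hA2.eigenvalues j - t)⁻¹ < 0 := inv_lt_zero.mpr (by linarith)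
    have : (0:ℝ) ≤ δ⁻¹ := le_of_lt (inv_pos.mpr hδ)
    linarith
  · exact inv_anti₀ hδ (hup j h)

lemma neg_Sval_le {δ : ℝ} (hδ : 0 < δ) (hne : ∀ j, hA2.eigenvalues j ≠ t)
    (hdown : ∀ j, hA2.eigenvalues j < t → δ ≤ t - hA2.eigenvalues j)
    (u : EuclideanSpace ℂ ι₂) : -Sval hA2 t u ≤ δ⁻¹ * ‖u‖ ^ 2 := by
  rw [Sval, norm_expand hA2 u, Finset.mul_sum, ← Finset.sum_neg_distrib]
  apply Finset.sum_le_sum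
  intro j _
  rw [← neg_mul]
  have hn : (0:ℝ) ≤ ‖⟪hA2.eigenvectorBasis j, u⟫‖ ^ 2 := by positivity
  apply mul_le_mul_of_nonneg_right _ hn
  rcases (hne j).lt_or_gt with h | h
  · rw [show -(hA2.eigenvalues j - t)⁻¹ = (t - hA2.eigenvalues j)⁻¹ by
      rw [← inv_neg]; ring_nf]
    exact inv_anti₀ hδ (hdown j h)
  · have : (0:ℝ) < (hA2.eigenvalues j - t)⁻¹ := inv_pos.mpr (by linarith)
    have : (0:ℝ) ≤ δ⁻¹ := le_of_lt (inv_pos.mpr hδ)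
    linarith

end TmapSec

lemma norm_toEuclideanLin_le {J : Type*} [Fintype J] (E : Matrix J ι₁ ℂ)
    (x : EuclideanSpace ℂ ι₁) :
    ‖Matrix.toEuclideanLin E x‖ ≤ specNorm E * ‖x‖ := by
  have := (LinearMap.toContinuousLinearMap (Matrix.toEuclideanLin E)).le_opNorm x
  simpa [specNorm] using this


section Shear

noncomputable def shearE (f : EuclideanSpace ℂ ι₁ →ₗ[ℂ] EuclideanSpace ℂ ι₂) :
    (EuclideanSpace ℂ ι₁ × EuclideanSpace ℂ ι₂) ≃ₗ[ℂ]
      (EuclideanSpace ℂ ι₁ × EuclideanSpace ℂ ι₂) where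
  toFun p := (p.1, p.2 - f p.1)
  invFun p := (p.1, p.2 + f p.1)
  left_inv p := by simp
  right_inv p := by simp
  map_add' a b := by
    refine Prod.ext rfl ?_
    simp only [map_add, Prod.snd_add, Prod.fst_add]
    abel
  map_smul' c a := by
    refine Prod.ext rfl ?_
    simp only [Prod.smul_snd, Prod.smul_fst, RingHom.id_apply, _root_.map_smul, smul_sub]

lemma finrank_submodule_prod {M M' : Type*} [AddCommGroup M] [Module ℂ M]
    [AddCommGroup M'] [Module ℂ M'] [FiniteDimensional ℂ M] [FiniteDimensional ℂ M']
    (p : Submodule ℂ M) (q : Submodule ℂ M') :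
    finrank ℂ (p.prod q) = finrank ℂ p + finrank ℂ q := by
  rw [← Module.finrank_prod]
  refine LinearEquiv.finrank_eq ?_
  exact
    { toFun := fun z => (⟨z.val.1, z.prop.1⟩, ⟨z.val.2, z.prop.2⟩)
      invFun := fun z => ⟨(z.1.val, z.2.val), ⟨z.1.prop, z.2.prop⟩⟩
      left_inv := fun z => rfl
      right_inv := fun z => rfl
      map_add' := fun a b => rfl
      map_smul' := fun c a => rfl }

variable {A1 : Matrix ι₁ ι₁ ℂ} {A2 : Matrix ι₂ ι₂ ℂ} {E : Matrix ι₂ ι₁ ℂ}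

lemma shear_identity (hA2 : A2.IsHermitian) (t : ℝ) (hne : ∀ j, hA2.eigenvalues j ≠ t)
    (x : EuclideanSpace ℂ ι₁) (y : EuclideanSpace ℂ ι₂) :
    qForm (fromBlocks A1 Eᴴ E A2) t
        (sumE (x, y - Tmap hA2 t (Matrix.toEuclideanLin E x))) =
      (qForm A1 t x - Sval hA2 t (Matrix.toEuclideanLin E x)) + qForm A2 t y := by
  have hsym := Matrix.isHermitian_iff_isSymmetric.mp hA2
  set u := Matrix.toEuclideanLin E x with hu
  set Tu := Tmap hA2 t u with hTu
  have F1 : Matrix.toEuclideanLin A2 Tu = u + (t : ℂ) • Tu := by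
    have := Tmap_solve hA2 t hne u
    rw [sub_eq_iff_eq_add] at this
    rw [this]
  have hTy : ⟪Tu, Matrix.toEuclideanLin A2 y⟫ = ⟪u, y⟫ + (t:ℂ) * ⟪Tu, y⟫ := by
    rw [← hsym Tu y, F1, inner_add_left, inner_smul_left, Complex.conj_ofReal]
  have hyT : ⟪y, Matrix.toEuclideanLin A2 Tu⟫ = ⟪y, u⟫ + (t:ℂ) * ⟪y, Tu⟫ := by
    rw [F1, inner_add_right, inner_smul_right]
  have hTT : ⟪Tu, Matrix.toEuclideanLin A2 Tu⟫ = ⟪Tu, u⟫ + (t:ℂ) * ⟪Tu, Tu⟫ := by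
    rw [F1, inner_add_right, inner_smul_right]
  have hS : Complex.re ⟪Tu, u⟫ = Sval hA2 t u := re_inner_Tmap hA2 t u
  have hsymm1 : Complex.re ⟪Tu, y⟫ = Complex.re ⟪y, Tu⟫ := by
    rw [← inner_conj_symm y Tu, Complex.conj_re]
  have hsymm2 : Complex.re ⟪u, y⟫ = Complex.re ⟪y, u⟫ := by
    rw [← inner_conj_symm y u, Complex.conj_re]
  rw [qForm_fromBlocks]
  have expand : qForm A2 t (y - Tu) = qForm A2 t y - 2 * Complex.re ⟪y, u⟫ + Sval hA2 t u := by
    rw [qForm, qForm, ← re_inner_self (y - Tu), ← re_inner_self y]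
    simp only [map_sub, inner_sub_left, inner_sub_right, hTy, hyT, hTT, Complex.sub_re,
      Complex.add_re, Complex.mul_re, Complex.ofReal_re, Complex.ofReal_im, zero_mul, sub_zero]
    rw [hsymm1, hsymm2, hS]
    ring
  have cross : 2 * Complex.re ⟪y - Tu, u⟫ = 2 * Complex.re ⟪y, u⟫ - 2 * Sval hA2 t u := by
    rw [inner_sub_left, Complex.sub_re, hS]
    ring
  rw [expand, cross]
  ring

end Shear


section CL

variable {A1 : Matrix ι₁ ι₁ ℂ} {A2 : Matrix ι₂ ι₂ ℂ} {E : Matrix ι₂ ι₁ ℂ}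

lemma specNorm_nonneg_s3 : 0 ≤ specNorm E := norm_nonneg _

lemma CL1 (hA1 : A1.IsHermitian) (hA2 : A2.IsHermitian)
    (hM : (fromBlocks A1 Eᴴ E A2).IsHermitian) (t δ : ℝ) (hδ : 0 < δ)
    (hne : ∀ j, hA2.eigenvalues j ≠ t)
    (hup : ∀ j, t < hA2.eigenvalues j → δ ≤ hA2.eigenvalues j - t) :
    cnt hM t ≤ cnt hA1 (t + specNorm E ^ 2 / δ) + cnt hA2 t := by
  classical
  set η := specNorm E ^ 2 / δ with hη
  set T : EuclideanSpace ℂ ι₁ →ₗ[ℂ] EuclideanSpace ℂ ι₂ :=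
    (Tmap hA2 t) ∘ₗ (Matrix.toEuclideanLin E) with hT
  set Φ := (shearE T).trans sumE with hΦ
  set P1 := eigSpan hA1 (Finset.univ.filter (fun j => ¬ hA1.eigenvalues j < t + η)) with hP1
  set P2 := eigSpan hA2 (Finset.univ.filter (fun j => ¬ hA2.eigenvalues j < t)) with hP2
  set P := Submodule.map Φ.toLinearMap (P1.prod P2) with hP
  have hnn : ∀ z ∈ P, 0 ≤ qForm (fromBlocks A1 Eᴴ E A2) t z := by
    intro z hz
    rw [hP, Submodule.mem_map] at hz
    obtain ⟨⟨x, y⟩, hxy, rfl⟩ := hz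
    obtain ⟨hx, hy⟩ := Submodule.mem_prod.mp hxy
    have happ : Φ.toLinearMap (x, y) =
        sumE (x, y - Tmap hA2 t (Matrix.toEuclideanLin E x)) := rfl
    rw [happ, shear_identity hA2 t hne x y]
    have h1 : 0 ≤ qForm A1 (t + η) x := qForm_nonneg_on hA1 hx
    have h2 : 0 ≤ qForm A2 t y := qForm_nonneg_on hA2 hy
    have h3 : Sval hA2 t (Matrix.toEuclideanLin E x) ≤ η * ‖x‖ ^ 2 := by
      have b1 := Sval_le hA2 t hδ hne hup (Matrix.toEuclideanLin E x)
      have b2 : ‖Matrix.toEuclideanLin E x‖ ^ 2 ≤ (specNorm E * ‖x‖) ^ 2 :=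
        pow_le_pow_left₀ (norm_nonneg _) (norm_toEuclideanLin_le E x) 2
      have hδi : (0:ℝ) ≤ δ⁻¹ := le_of_lt (inv_pos.mpr hδ)
      calc Sval hA2 t (Matrix.toEuclideanLin E x) ≤ δ⁻¹ * ‖Matrix.toEuclideanLin E x‖ ^ 2 := b1
        _ ≤ δ⁻¹ * (specNorm E * ‖x‖) ^ 2 := mul_le_mul_of_nonneg_left b2 hδi
        _ = η * ‖x‖ ^ 2 := by rw [hη]; ring
    have h4 : qForm A1 t x = qForm A1 (t + η) x + η * ‖x‖ ^ 2 := by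
      rw [qForm, qForm]; ring
    linarith
  have hcard := cnt_add_finrank_le hM P hnn
  have hfr : finrank ℂ P = finrank ℂ P1 + finrank ℂ P2 := by
    rw [hP, LinearEquiv.finrank_map_eq, finrank_submodule_prod]
  have hfr1 : finrank ℂ P1 =
      (Finset.univ.filter (fun j => ¬ hA1.eigenvalues j < t + η)).card := finrank_eigSpan hA1 _
  have hfr2 : finrank ℂ P2 =
      (Finset.univ.filter (fun j => ¬ hA2.eigenvalues j < t)).card := finrank_eigSpan hA2 _
  have e1 : cnt hA1 (t + η) +
      (Finset.univ.filter (fun j => ¬ hA1.eigenvalues j < t + η)).card = Fintype.card ι₁ := by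
    rw [cnt, Finset.card_filter_add_card_filter_not, Finset.card_univ]
  have e2 : cnt hA2 t +
      (Finset.univ.filter (fun j => ¬ hA2.eigenvalues j < t)).card = Fintype.card ι₂ := by
    rw [cnt, Finset.card_filter_add_card_filter_not, Finset.card_univ]
  have e3 : Fintype.card (ι₁ ⊕ ι₂) = Fintype.card ι₁ + Fintype.card ι₂ := Fintype.card_sum
  omega

lemma CL2 (hA1 : A1.IsHermitian) (hA2 : A2.IsHermitian)
    (hM : (fromBlocks A1 Eᴴ E A2).IsHermitian) (t δ : ℝ) (hδ : 0 < δ)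
    (hne : ∀ j, hA2.eigenvalues j ≠ t)
    (hdown : ∀ j, hA2.eigenvalues j < t → δ ≤ t - hA2.eigenvalues j) :
    cnt hA1 (t - specNorm E ^ 2 / δ) + cnt hA2 t ≤ cnt hM t := by
  classical
  set η := specNorm E ^ 2 / δ with hη
  set T : EuclideanSpace ℂ ι₁ →ₗ[ℂ] EuclideanSpace ℂ ι₂ :=
    (Tmap hA2 t) ∘ₗ (Matrix.toEuclideanLin E) with hT
  set Φ := (shearE T).trans sumE with hΦ
  set W1 := eigSpan hA1 (Finset.univ.filter (fun j => hA1.eigenvalues j < t - η)) with hW1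
  set W2 := eigSpan hA2 (Finset.univ.filter (fun j => hA2.eigenvalues j < t)) with hW2
  set W := Submodule.map Φ.toLinearMap (W1.prod W2) with hW
  have hneg : ∀ z ∈ W, z ≠ 0 → qForm (fromBlocks A1 Eᴴ E A2) t z < 0 := by
    intro z hz hz0
    rw [hW, Submodule.mem_map] at hz
    obtain ⟨⟨x, y⟩, hxy, rfl⟩ := hz
    obtain ⟨hx, hy⟩ := Submodule.mem_prod.mp hxy
    have happ : Φ.toLinearMap (x, y) =
        sumE (x, y - Tmap hA2 t (Matrix.toEuclideanLin E x)) := rfl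
    rw [happ, shear_identity hA2 t hne x y]
    have h3 : -Sval hA2 t (Matrix.toEuclideanLin E x) ≤ η * ‖x‖ ^ 2 := by
      have b1 := neg_Sval_le hA2 t hδ hne hdown (Matrix.toEuclideanLin E x)
      have b2 : ‖Matrix.toEuclideanLin E x‖ ^ 2 ≤ (specNorm E * ‖x‖) ^ 2 :=
        pow_le_pow_left₀ (norm_nonneg _) (norm_toEuclideanLin_le E x) 2
      have hδi : (0:ℝ) ≤ δ⁻¹ := le_of_lt (inv_pos.mpr hδ)
      calc -Sval hA2 t (Matrix.toEuclideanLin E x)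
          ≤ δ⁻¹ * ‖Matrix.toEuclideanLin E x‖ ^ 2 := b1
        _ ≤ δ⁻¹ * (specNorm E * ‖x‖) ^ 2 := mul_le_mul_of_nonneg_left b2 hδi
        _ = η * ‖x‖ ^ 2 := by rw [hη]; ring
    by_cases hx0 : x = 0
    · subst hx0
      have hy0 : y ≠ 0 := by
        intro hy0
        apply hz0
        rw [happ]
        rw [hy0]
        simp [Sval_zero, qForm_zero]
      have h5 : qForm A2 t y < 0 := qForm_neg_on hA2 hy hy0
      have h6 : Sval hA2 t (Matrix.toEuclideanLin E 0) = 0 := by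
        rw [map_zero, Sval_zero]
      rw [h6, qForm_zero]
      linarith
    · have h5 : qForm A1 (t - η) x < 0 := qForm_neg_on hA1 hx hx0
      have h6 : qForm A2 t y ≤ 0 := by
        rcases eq_or_ne y 0 with rfl | hy0
        · rw [qForm_zero]
        · exact le_of_lt (qForm_neg_on hA2 hy hy0)
      have h4 : qForm A1 t x = qForm A1 (t - η) x - η * ‖x‖ ^ 2 := by
        rw [qForm, qForm]; ring
      linarith
  have hcard := finrank_le_cnt hM W hneg
  have hfr : finrank ℂ W = finrank ℂ W1 + finrank ℂ W2 := by
    rw [hW, LinearEquiv.finrank_map_eq, finrank_submodule_prod]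
  have hfr1 : finrank ℂ W1 = cnt hA1 (t - η) := finrank_eigSpan hA1 _
  have hfr2 : finrank ℂ W2 = cnt hA2 t := finrank_eigSpan hA2 _
  omega

end CL

section Weyl

variable {I : Type*} [Fintype I] [DecidableEq I]

lemma cnt_shift {H H' : Matrix I I ℂ} (hH : H.IsHermitian) (hH' : H'.IsHermitian)
    (c t : ℝ)
    (hc : ∀ x : EuclideanSpace ℂ I, Complex.re ⟪x, Matrix.toEuclideanLin H x⟫ ≤
      Complex.re ⟪x, Matrix.toEuclideanLin H' x⟫ + c * ‖x‖ ^ 2) :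
    cnt hH' t ≤ cnt hH (t + c) := by
  classical
  set P := eigSpan hH (Finset.univ.filter (fun j => ¬ hH.eigenvalues j < t + c)) with hPd
  have hnn : ∀ z ∈ P, 0 ≤ qForm H' t z := by
    intro z hz
    have h1 : 0 ≤ qForm H (t + c) z := qForm_nonneg_on hH hz
    have h2 := hc z
    rw [qForm] at h1 ⊢
    nlinarith [h1, h2]
  have hcard := cnt_add_finrank_le hH' P hnn
  have hfr : finrank ℂ P =
      (Finset.univ.filter (fun j => ¬ hH.eigenvalues j < t + c)).card := finrank_eigSpan hH _
  have e1 : cnt hH (t + c) +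
      (Finset.univ.filter (fun j => ¬ hH.eigenvalues j < t + c)).card = Fintype.card I := by
    rw [cnt, Finset.card_filter_add_card_filter_not, Finset.card_univ]
  omega

end Weyl

section OffDiag

variable {A1 : Matrix ι₁ ι₁ ℂ} {A2 : Matrix ι₂ ι₂ ℂ} {E : Matrix ι₂ ι₁ ℂ}

lemma re_block_diff (A1 : Matrix ι₁ ι₁ ℂ) (A2 : Matrix ι₂ ι₂ ℂ) (E : Matrix ι₂ ι₁ ℂ)
    (z : EuclideanSpace ℂ (ι₁ ⊕ ι₂)) :
    |Complex.re ⟪z, Matrix.toEuclideanLin (fromBlocks A1 Eᴴ E A2) z⟫ -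
      Complex.re ⟪z, Matrix.toEuclideanLin (fromBlocks A1 0 0 A2) z⟫| ≤
        specNorm E * ‖z‖ ^ 2 := by
  obtain ⟨⟨x, y⟩, rfl⟩ : ∃ p, sumE p = z := ⟨sumE.symm z, by simp⟩
  have hq : ∀ (M : Matrix (ι₁ ⊕ ι₂) (ι₁ ⊕ ι₂) ℂ) (u : EuclideanSpace ℂ (ι₁ ⊕ ι₂)),
      Complex.re ⟪u, Matrix.toEuclideanLin M u⟫ = qForm M 0 u := by
    intro M u; rw [qForm]; ring
  rw [hq, hq]
  have hz : fromBlocks A1 (0 : Matrix ι₁ ι₂ ℂ) (0 : Matrix ι₂ ι₁ ℂ) A2 =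
      fromBlocks A1 (0 : Matrix ι₂ ι₁ ℂ)ᴴ (0 : Matrix ι₂ ι₁ ℂ) A2 := by
    rw [conjTranspose_zero]
  rw [hz, qForm_fromBlocks, qForm_fromBlocks]
  have hE0 : Matrix.toEuclideanLin (0 : Matrix ι₂ ι₁ ℂ) = 0 := map_zero _
  rw [hE0]
  simp only [LinearMap.zero_apply, inner_zero_right, Complex.zero_re, mul_zero, add_zero]
  have hsimp : qForm A1 0 x + 2 * Complex.re ⟪y, Matrix.toEuclideanLin E x⟫ + qForm A2 0 y -
      (qForm A1 0 x + qForm A2 0 y) = 2 * Complex.re ⟪y, Matrix.toEuclideanLin E x⟫ := by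
    ring
  rw [hsimp, sumE_norm_sq]
  have h1 : |Complex.re ⟪y, Matrix.toEuclideanLin E x⟫| ≤ ‖y‖ * (specNorm E * ‖x‖) := by
    calc |Complex.re ⟪y, Matrix.toEuclideanLin E x⟫| ≤ ‖(⟪y, Matrix.toEuclideanLin E x⟫ : ℂ)‖ :=
        Complex.abs_re_le_norm _
      _ ≤ ‖y‖ * ‖Matrix.toEuclideanLin E x‖ := norm_inner_le_norm _ _
      _ ≤ ‖y‖ * (specNorm E * ‖x‖) :=
        mul_le_mul_of_nonneg_left (norm_toEuclideanLin_le E x) (norm_nonneg _)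
  rw [abs_mul, abs_two]
  have hsq : 2 * (‖y‖ * (specNorm E * ‖x‖)) ≤ specNorm E * (‖x‖ ^ 2 + ‖y‖ ^ 2) := by
    nlinarith [sq_nonneg (‖x‖ - ‖y‖), specNorm_nonneg_s3 (E := E), norm_nonneg x, norm_nonneg y]
  nlinarith [h1, abs_nonneg (Complex.re ⟪y, Matrix.toEuclideanLin E x⟫)]

end OffDiag

end Blocks

lemma ithEig_congr {I : Type*} [Fintype I] [DecidableEq I] {A B : Matrix I I ℂ}
    (hA : A.IsHermitian) (hB : B.IsHermitian) (h : A = B) (i : Fin (Fintype.card I)) :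
    ithEig hA i = ithEig hB i := by subst h; rfl

lemma specNorm_zero {J L : Type*} [Fintype J] [Fintype L] [DecidableEq L] :
    specNorm (0 : Matrix J L ℂ) = 0 := by
  rw [specNorm, map_zero, map_zero, norm_zero]

set_option maxHeartbeats 1000000

/-- Classical quadratic residual bound (Parlett/Mathias). -/
theorem stmt_3 {m k : ℕ}
    (A1 : Matrix (Fin m) (Fin m) ℂ) (A2 : Matrix (Fin k) (Fin k) ℂ)
    (E : Matrix (Fin k) (Fin m) ℂ)
    (hA : (fromBlocks A1 0 0 A2).IsHermitian)
    (hA2 : A2.IsHermitian)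
    (hAhat : (fromBlocks A1 Eᴴ E A2).IsHermitian)
    (i : Fin (Fintype.card (Fin m ⊕ Fin k)))
    (hsep : ∀ j, ithEig hA i ≠ hA2.eigenvalues j) :
    |ithEig hA i - ithEig hAhat i| ≤
      specNorm E ^ 2 / ⨅ j, |ithEig hA i - hA2.eigenvalues j| := by
  classical
  obtain ⟨hA1, -, -, -⟩ := Matrix.isHermitian_fromBlocks_iff.mp hAhat
  rcases Nat.eq_zero_or_pos k with hk | hk
  · subst hk
    have hEeq : E = 0 := by ext j i'; exact Fin.elim0 j
    have hMeq : fromBlocks A1 Eᴴ E A2 = fromBlocks A1 0 0 A2 := by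
      rw [hEeq, conjTranspose_zero]
    have heig : ithEig hAhat i = ithEig hA i := ithEig_congr hAhat hA hMeq i
    rw [heig, sub_self, abs_zero]
    rw [iInf_of_isEmpty, Real.sInf_empty, div_zero]
  have hnek : Nonempty (Fin k) := ⟨⟨0, hk⟩⟩
  set μ := ithEig hA i with hμdef
  set lhat := ithEig hAhat i with hlhatdef
  set ε := specNorm E with hεdef
  set δ := ⨅ j, |μ - hA2.eigenvalues j| with hδdef
  set η := ε ^ 2 / δ with hηdef
  have hbdd : BddBelow (Set.range fun j => |μ - hA2.eigenvalues j|) := by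
    refine ⟨0, ?_⟩
    rintro r ⟨j, rfl⟩
    exact abs_nonneg _
  have hδle : ∀ j, δ ≤ |μ - hA2.eigenvalues j| := fun j => ciInf_le hbdd j
  have hδpos : 0 < δ := by
    obtain ⟨j0, hj0⟩ := Finite.exists_min (fun j => |μ - hA2.eigenvalues j|)
    have h1 : |μ - hA2.eigenvalues j0| ≤ δ := le_ciInf hj0
    have h2 : 0 < |μ - hA2.eigenvalues j0| := abs_pos.mpr (sub_ne_zero.mpr (hsep j0))
    linarith
  have hη0 : 0 ≤ η := div_nonneg (sq_nonneg _) hδpos.le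
  have hε0 : 0 ≤ ε := specNorm_nonneg_s3
  have hgapL : ∀ j, hA2.eigenvalues j ≤ μ - δ ∨ μ + δ ≤ hA2.eigenvalues j := by
    intro j
    rcases le_or_gt (hA2.eigenvalues j) μ with h | h
    · left
      have h2 := hδle j
      rw [abs_of_nonneg (by linarith)] at h2
      linarith
    · right
      have h2 := hδle j
      rw [abs_sub_comm, abs_of_nonneg (by linarith)] at h2
      linarith
  have hA0 : (fromBlocks A1 (0 : Matrix (Fin k) (Fin m) ℂ)ᴴ 0 A2).IsHermitian := by
    rw [conjTranspose_zero]; exact hA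
  have hcnt0 : ∀ u, cnt hA0 u = cnt hA u :=
    fun u => cnt_congr _ _ (by rw [conjTranspose_zero]) u
  have hAcnt : cnt hA μ ≤ i.val := cnt_ithEig_le hA i
  -- Both directions of the Weyl-type comparison
  have hcmp1 : ∀ x : EuclideanSpace ℂ (Fin m ⊕ Fin k),
      Complex.re ⟪x, Matrix.toEuclideanLin (fromBlocks A1 0 0 A2) x⟫ ≤
        Complex.re ⟪x, Matrix.toEuclideanLin (fromBlocks A1 Eᴴ E A2) x⟫ + ε * ‖x‖ ^ 2 := by
    intro x
    have := abs_le.mp (re_block_diff A1 A2 E x)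
    rw [← hεdef] at this
    linarith [this.1]
  have hcmp2 : ∀ x : EuclideanSpace ℂ (Fin m ⊕ Fin k),
      Complex.re ⟪x, Matrix.toEuclideanLin (fromBlocks A1 Eᴴ E A2) x⟫ ≤
        Complex.re ⟪x, Matrix.toEuclideanLin (fromBlocks A1 0 0 A2) x⟫ + ε * ‖x‖ ^ 2 := by
    intro x
    have := abs_le.mp (re_block_diff A1 A2 E x)
    rw [← hεdef] at this
    linarith [this.2]
  have main1 : μ - η ≤ lhat := by
    rcases le_or_gt δ ε with hcase | hcase
    · -- Weyl case
      have hεη : ε ≤ η := by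
        rw [hηdef, le_div_iff₀ hδpos, pow_two]
        exact mul_le_mul_of_nonneg_left hcase hε0
      by_contra hcon
      push_neg at hcon
      set t := (lhat + (μ - ε)) / 2 with htdef
      have ht1 : lhat < t := by
        rw [htdef]; change lhat < _ ; nlinarith [hcon, hεη]
      have ht2 : t < μ - ε := by rw [htdef]; nlinarith [hcon, hεη]
      have hshift := cnt_shift hA hAhat ε t hcmp1
      have hmono : cnt hA (t + ε) ≤ cnt hA μ := cnt_mono hA (by linarith)
      have := le_ithEig hAhat (show cnt hAhat t ≤ i.val by omega)
      rw [← hlhatdef] at this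
      linarith
    · -- Mathias case
      have hηδ : η < δ := by
        rw [hηdef, div_lt_iff₀ hδpos]
        nlinarith
      by_contra hcon
      push_neg at hcon
      set t := max ((lhat + (μ - η)) / 2) (((μ - δ) + (μ - η)) / 2) with htdef
      have ht1 : t < μ - η := by
        apply max_lt <;> [nlinarith; nlinarith]
      have ht2 : lhat < t := by
        calc lhat < (lhat + (μ - η)) / 2 := by nlinarith
          _ ≤ t := le_max_left _ _
      have ht3 : μ - δ < t := by
        calc μ - δ < ((μ - δ) + (μ - η)) / 2 := by nlinarith
          _ ≤ t := le_max_right _ _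
      have htμ : t < μ := by nlinarith
      have hne : ∀ j, hA2.eigenvalues j ≠ t := by
        intro j
        rcases hgapL j with h | h <;> intro hEq <;> rw [hEq] at h <;> linarith
      have hup : ∀ j, t < hA2.eigenvalues j → δ ≤ hA2.eigenvalues j - t := by
        intro j hj
        rcases hgapL j with h | h
        · linarith
        · linarith
      have hCL1 := CL1 hA1 hA2 hAhat t δ hδpos hne hup
      rw [← hεdef, ← hηdef] at hCL1
      have hb1 : cnt hA1 (t + η) ≤ cnt hA1 μ := cnt_mono hA1 (by linarith)
      have hb2 : cnt hA2 t ≤ cnt hA2 μ := cnt_mono hA2 htμ.le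
      have hne_mu : ∀ j, hA2.eigenvalues j ≠ μ := fun j h => hsep j h.symm
      have hdown_mu : ∀ j, hA2.eigenvalues j < μ → δ ≤ μ - hA2.eigenvalues j := by
        intro j hj
        rcases hgapL j with h | h
        · linarith
        · linarith
      have hCL2 := CL2 hA1 hA2 hA0 μ δ hδpos hne_mu hdown_mu
      rw [specNorm_zero] at hCL2
      have hz : μ - (0:ℝ) ^ 2 / δ = μ := by norm_num
      rw [hz, hcnt0] at hCL2
      have hfin := le_ithEig hAhat (show cnt hAhat t ≤ i.val by omega)
      rw [← hlhatdef] at hfin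
      linarith
  have main2 : lhat ≤ μ + η := by
    rcases le_or_gt δ ε with hcase | hcase
    · -- Weyl case
      have hεη : ε ≤ η := by
        rw [hηdef, le_div_iff₀ hδpos, pow_two]
        exact mul_le_mul_of_nonneg_left hcase hε0
      by_contra hcon
      push_neg at hcon
      set t := ((μ + ε) + lhat) / 2 with htdef
      have ht1 : μ + ε < t := by rw [htdef]; nlinarith
      have ht2 : t < lhat := by rw [htdef]; nlinarith
      have hshift := cnt_shift hAhat hA ε (t - ε) hcmp2
      rw [sub_add_cancel] at hshift
      have h8 : i.val < cnt hA (t - ε) := lt_cnt_of_ithEig_lt hA (by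
        rw [← hμdef]; linarith)
      have := ithEig_lt hAhat (show i.val < cnt hAhat t by omega)
      rw [← hlhatdef] at this
      linarith
    · -- Mathias case
      have hηδ : η < δ := by
        rw [hηdef, div_lt_iff₀ hδpos]
        nlinarith
      by_contra hcon
      push_neg at hcon
      set t := min ((μ + η + lhat) / 2) ((μ + η + (μ + δ)) / 2) with htdef
      have ht1 : μ + η < t := by
        apply lt_min <;> [nlinarith; nlinarith]
      have ht2 : t < lhat := by
        calc t ≤ (μ + η + lhat) / 2 := min_le_left _ _
          _ < lhat := by nlinarith
      have ht3 : t < μ + δ := by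
        calc t ≤ (μ + η + (μ + δ)) / 2 := min_le_right _ _
          _ < μ + δ := by nlinarith
      have htμ : μ < t := by nlinarith
      have hne_t : ∀ j, hA2.eigenvalues j ≠ t := by
        intro j
        rcases hgapL j with h | h <;> intro hEq <;> rw [hEq] at h <;> linarith
      have hdown_t : ∀ j, hA2.eigenvalues j < t → δ ≤ t - hA2.eigenvalues j := by
        intro j hj
        rcases hgapL j with h | h
        · linarith
        · linarith
      have hCL2 := CL2 hA1 hA2 hAhat t δ hδpos hne_t hdown_t
      rw [← hεdef, ← hηdef] at hCL2
      set u := t - η with hudef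
      have huμ : μ < u := by rw [hudef]; linarith
      have huδ : u < μ + δ := by rw [hudef]; linarith
      set δ' := μ + δ - u with hδ'def
      have hδ'pos : 0 < δ' := by rw [hδ'def]; linarith
      have hne_u : ∀ j, hA2.eigenvalues j ≠ u := by
        intro j
        rcases hgapL j with h | h <;> intro hEq <;> rw [hEq] at h <;> linarith
      have hup_u : ∀ j, u < hA2.eigenvalues j → δ' ≤ hA2.eigenvalues j - u := by
        intro j hj
        rcases hgapL j with h | h
        · linarith
        · rw [hδ'def]; linarith
      have hCL1 := CL1 hA1 hA2 hA0 u δ' hδ'pos hne_u hup_u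
      rw [specNorm_zero] at hCL1
      have hz : u + (0:ℝ) ^ 2 / δ' = u := by norm_num
      rw [hz, hcnt0] at hCL1
      have hb2 : cnt hA2 u ≤ cnt hA2 t := cnt_mono hA2 (by rw [hudef]; linarith)
      have h8 : i.val < cnt hA u := lt_cnt_of_ithEig_lt hA (by rw [← hμdef]; exact huμ)
      have hfin := ithEig_lt hAhat (show i.val < cnt hAhat t by omega)
      rw [← hlhatdef] at hfin
      linarith
  rw [abs_sub_le_iff]
  constructor <;> [linarith; linarith]
end

section
/- Let A be real symmetric tridiagonal with diagonal a_1,…,a_n and positive subdiagonals b_1,…,b_{n−1}, let λ be an eigenvalue with unit eigenvector x, and suppose that for some index m all of a_1,…,a_m satisfy |a_i − λ| > b_{i−1} + b_i (with b_0 = 0). Then the eigenvector components are increasing in magnitude along the first m+1 entries: |x_1| ≤ |x_2| ≤ … ≤ |x_{m+1}|, and moreover |x_i|/|x_{i+1}| ≤ b_i/(|a_i − λ| − b_{i−1}) < 1 for 1 ≤ i ≤ m (whenever x_{i+1} ≠ 0). -/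
open Matrix

/-- The n×n symmetric tridiagonal matrix with (1-based) diagonal `a 1, …, a n`
and off-diagonal entries `b 1, …, b (n-1)`. -/
def tridiag (n : ℕ) (a b : ℕ → ℝ) : Matrix (Fin n) (Fin n) ℝ :=
  Matrix.of fun i j =>
    if (i : ℕ) = j then a ((i : ℕ) + 1)
    else if (i : ℕ) + 1 = j then b ((i : ℕ) + 1)
    else if (j : ℕ) + 1 = i then b ((j : ℕ) + 1)
    else 0

/-- If an eigenvalue of a symmetric tridiagonal matrix is disjoint from the
first `m` Gerschgorin disks, the eigenvector components increase in magnitude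
along the first `m+1` entries, with ratios `b i / (|a i − λ| − b (i-1)) < 1`.
The vector `x` is 1-based with `x 0 = x (n+1) = 0`, and `b 0 = 0`, `b n = 0`. -/
theorem stmt_5 (n m : ℕ) (a b : ℕ → ℝ) (hb0 : b 0 = 0) (hbn : b n = 0)
    (hbpos : ∀ i, 1 ≤ i → i ≤ n - 1 → 0 < b i)
    (hm : m ≤ n - 1)
    (lam : ℝ) (x : ℕ → ℝ) (hx0 : x 0 = 0) (hxtop : x (n + 1) = 0)
    (heig : (tridiag n a b).mulVec (fun i => x ((i : ℕ) + 1))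
      = lam • fun i : Fin n => x ((i : ℕ) + 1))
    (hunit : euclNorm (fun i : Fin n => x ((i : ℕ) + 1)) = 1)
    (hgap : ∀ i, 1 ≤ i → i ≤ m → |a i - lam| > b (i - 1) + b i) :
    (∀ i, 1 ≤ i → i ≤ m → |x i| ≤ |x (i + 1)|) ∧
    (∀ i, 1 ≤ i → i ≤ m →
      b i / (|a i - lam| - b (i - 1)) < 1 ∧
      (x (i + 1) ≠ 0 → |x i| / |x (i + 1)| ≤ b i / (|a i - lam| - b (i - 1)))) := by
  -- auxiliary: sum of indicator over Fin n
  have sumIte : ∀ (t : ℕ) (c : ℝ),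
      (∑ j : Fin n, if (j : ℕ) = t then c else 0) = if t < n then c else 0 := by
    intro t c
    by_cases ht : t < n
    · rw [if_pos ht]
      have : (∑ j : Fin n, if (j : ℕ) = t then c else 0)
          = ∑ j : Fin n, if j = (⟨t, ht⟩ : Fin n) then c else 0 := by
        refine Finset.sum_congr rfl fun j _ => ?_
        simp [Fin.ext_iff]
      rw [this, Finset.sum_ite_eq' Finset.univ, if_pos (Finset.mem_univ _)]
    · rw [if_neg ht]
      refine Finset.sum_eq_zero fun j _ => ?_
      rw [if_neg]
      have := j.isLt
      omega
  -- the three-term recurrence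
  have hrec : ∀ i : ℕ, i < n →
      b i * x i + (a (i + 1) - lam) * x (i + 1) + b (i + 1) * x (i + 2) = 0 := by
    intro i h
    have h1 := congrFun heig ⟨i, h⟩
    simp only [Matrix.mulVec, dotProduct, Pi.smul_apply, smul_eq_mul] at h1
    have hg : ∀ j : Fin n, tridiag n a b ⟨i, h⟩ j * x ((j : ℕ) + 1)
        = (if (j : ℕ) + 1 = i then b i * x i else 0)
        + (if (j : ℕ) = i then a (i + 1) * x (i + 1) else 0)
        + (if (j : ℕ) = i + 1 then b (i + 1) * x (i + 2) else 0) := by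
      intro j
      simp only [tridiag, Matrix.of_apply]
      rcases eq_or_ne (i : ℕ) (j : ℕ) with h1 | h1
      · rw [if_pos h1, if_pos (by omega : (j:ℕ) = i)]
        rw [if_neg (by omega), if_neg (by omega)]
        rw [← h1]; ring
      · rw [if_neg h1]
        rcases eq_or_ne (i + 1) (j : ℕ) with h2 | h2
        · rw [if_pos h2, if_pos (by omega : (j:ℕ) = i + 1)]
          rw [if_neg (by omega), if_neg (by omega)]
          rw [show (j:ℕ) + 1 = i + 2 by omega]; ring
        · rw [if_neg h2]
          rcases eq_or_ne ((j : ℕ) + 1) i with h3 | h3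
          · rw [if_pos h3, if_pos h3]
            rw [if_neg (by omega), if_neg (by omega), h3]; ring
          · rw [if_neg h3, if_neg h3, if_neg (by omega), if_neg (by omega)]
            ring
    rw [Finset.sum_congr rfl (fun j _ => hg j), Finset.sum_add_distrib,
      Finset.sum_add_distrib] at h1
    -- compute the three sums
    have s2 : (∑ j : Fin n, if (j : ℕ) = i then a (i + 1) * x (i + 1) else 0)
        = a (i + 1) * x (i + 1) := by rw [sumIte, if_pos h]
    have s3 : (∑ j : Fin n, if (j : ℕ) = i + 1 then b (i + 1) * x (i + 2) else 0)
        = b (i + 1) * x (i + 2) := by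
      rw [sumIte]
      by_cases h4 : i + 1 < n
      · rw [if_pos h4]
      · rw [if_neg h4]
        have : i + 1 = n := by omega
        rw [this, hbn]; ring
    have s1 : (∑ j : Fin n, if (j : ℕ) + 1 = i then b i * x i else 0) = b i * x i := by
      match i with
      | 0 =>
        rw [hx0]
        simp
      | i' + 1 =>
        have : (∑ j : Fin n, if (j : ℕ) + 1 = i' + 1 then b (i' + 1) * x (i' + 1) else 0)
            = ∑ j : Fin n, if (j : ℕ) = i' then b (i' + 1) * x (i' + 1) else 0 := by
          refine Finset.sum_congr rfl fun j _ => ?_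
          congr 1
          simp
        rw [this, sumIte, if_pos (by omega)]
    rw [s1, s2, s3] at h1
    linarith
  -- monotonicity from key inequality
  have keymain : ∀ i : ℕ, 1 ≤ i → i ≤ m →
      (|a i - lam| - b (i - 1)) * |x i| ≤ b i * |x (i + 1)| ∧ |x i| ≤ |x (i + 1)| := by
    intro i
    induction i with
    | zero => intro h; omega
    | succ k ih =>
      intro _ him
      have hkn : k < n := by omega
      have hgapk := hgap (k + 1) (by omega) him
      have hbk1 : 0 < b (k + 1) := hbpos (k + 1) (by omega) (by omega)
      have hrec' := hrec k hkn
      have hDpos : 0 < |a (k + 1) - lam| - b (k + 1 - 1) := by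
        simp only [Nat.add_sub_cancel] at *
        linarith
      have hkey : (|a (k + 1) - lam| - b (k + 1 - 1)) * |x (k + 1)| ≤ b (k + 1) * |x (k + 2)| := by
        rcases Nat.eq_zero_or_pos k with h0 | hk
        · subst h0
          rw [hb0, hx0] at hrec'
          have heq : (a 1 - lam) * x 1 = -(b 1 * x 2) := by linarith
          have : |a 1 - lam| * |x 1| = b 1 * |x 2| := by
            rw [← abs_mul, heq, abs_neg, abs_mul, abs_of_pos hbk1]
          simp only [Nat.add_sub_cancel, hb0]
          norm_num at this ⊢
          linarith
        · obtain ⟨keyk, monk⟩ := ih (by omega) (by omega)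
          have hbknn : 0 < b k := hbpos k (by omega) (by omega)
          have heq : (a (k + 1) - lam) * x (k + 1) = -(b k * x k + b (k + 1) * x (k + 2)) := by
            linarith
          have h2 : |a (k + 1) - lam| * |x (k + 1)| ≤ b k * |x k| + b (k + 1) * |x (k + 2)| := by
            rw [← abs_mul, heq, abs_neg]
            calc |b k * x k + b (k + 1) * x (k + 2)|
                ≤ |b k * x k| + |b (k + 1) * x (k + 2)| := abs_add_le _ _
              _ = b k * |x k| + b (k + 1) * |x (k + 2)| := by
                  rw [abs_mul, abs_mul, abs_of_pos hbknn, abs_of_pos hbk1]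
          have h3 : b k * |x k| ≤ b k * |x (k + 1)| :=
            mul_le_mul_of_nonneg_left monk (le_of_lt hbknn)
          simp only [Nat.add_sub_cancel]
          nlinarith
      refine ⟨hkey, ?_⟩
      nlinarith [abs_nonneg (x (k + 2)), abs_nonneg (x (k + 1)), hkey, hDpos,
        mul_le_mul_of_nonneg_right (le_of_lt hDpos) (abs_nonneg (x (k + 2)))]
  constructor
  · intro i h1 h2; exact (keymain i h1 h2).2
  · intro i h1 h2
    have hg := hgap i h1 h2
    have hbi : 0 < b i := hbpos i h1 (by omega)
    have hD : 0 < |a i - lam| - b (i - 1) := by linarith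
    refine ⟨(div_lt_one hD).mpr (by linarith), fun hne => ?_⟩
    have hxp : 0 < |x (i + 1)| := abs_pos.mpr hne
    rw [div_le_div_iff₀ hxp hD]
    have := (keymain i h1 h2).1
    linarith
end

section
/- Let A be real symmetric tridiagonal with diagonal a_1,…,a_n and positive subdiagonals b_1,…,b_{n−1}. Let λ be an eigenvalue with unit eigenvector x, and suppose |a_i − λ| > b_{i−1} + b_i for 1 ≤ i ≤ m (with b_0 = 0). Then |x_1| ≤ ∏_{i=1}^{m} b_i/(|a_i − λ| − b_{i−1}), i.e., the first eigenvector component is exponentially small in the product of the ratios. -/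
open Matrix

lemma sum_ite_fin (n k : ℕ) (c : ℝ) (hc : n ≤ k → c = 0) :
    (∑ j : Fin n, if (j : ℕ) = k then c else 0) = c := by
  by_cases h : k < n
  · rw [Finset.sum_eq_single (⟨k, h⟩ : Fin n)]
    · simp
    · intro j _ hj
      rw [if_neg]
      intro hjk
      exact hj (Fin.ext hjk)
    · simp
  · rw [hc (le_of_not_gt h)]
    apply Finset.sum_eq_zero
    intro j _
    rw [if_neg]
    have := j.isLt
    omega

/-- Chained decay bound: the first eigenvector component is bounded by the
product of the one-step decay ratios.  `x` is 1-based, `x 0 = x (n+1) = 0`,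
`b 0 = b n = 0`. -/
theorem stmt_6 (n m : ℕ) (a b : ℕ → ℝ) (hb0 : b 0 = 0) (hbn : b n = 0)
    (hbpos : ∀ i, 1 ≤ i → i ≤ n - 1 → 0 < b i)
    (hm : m ≤ n - 1)
    (lam : ℝ) (x : ℕ → ℝ) (hx0 : x 0 = 0) (hxtop : x (n + 1) = 0)
    (heig : (tridiag n a b).mulVec (fun i => x ((i : ℕ) + 1))
      = lam • fun i : Fin n => x ((i : ℕ) + 1))
    (hunit : euclNorm (fun i : Fin n => x ((i : ℕ) + 1)) = 1)
    (hgap : ∀ i, 1 ≤ i → i ≤ m → |a i - lam| > b (i - 1) + b i) :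
    |x 1| ≤ ∏ i ∈ Finset.Icc 1 m, b i / (|a i - lam| - b (i - 1)) := by
  -- n ≥ 1
  have hn : 1 ≤ n := by
    by_contra h
    have hn0 : n = 0 := by omega
    subst hn0
    simp [euclNorm] at hunit
  -- nonnegativity of b
  have hbnn : ∀ i, i ≤ n → 0 ≤ b i := by
    intro i hi
    rcases Nat.eq_zero_or_pos i with h | h
    · subst h; simp [hb0]
    · rcases Nat.lt_or_ge i n with h2 | h2
      · exact (hbpos i h (by omega)).le
      · have : i = n := by omega
        subst this; simp [hbn]
  -- row equations
  have key : ∀ k, 1 ≤ k → k ≤ n →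
      b (k - 1) * x (k - 1) + a k * x k + b k * x (k + 1) = lam * x k := by
    intro k hk1 hkn
    have hi : k - 1 < n := by omega
    have h := congrFun heig ⟨k - 1, hi⟩
    simp only [Matrix.mulVec, dotProduct, Pi.smul_apply, smul_eq_mul] at h
    have hrow : ∀ j : Fin n, tridiag n a b ⟨k - 1, hi⟩ j * x ((j : ℕ) + 1)
        = (if (j : ℕ) = k - 1 then a k * x k else 0)
        + ((if (j : ℕ) = k then b k * x (k + 1) else 0)
        + (if (j : ℕ) + 2 = k then b (k - 1) * x (k - 1) else 0)) := by
      intro j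
      simp only [tridiag, Matrix.of_apply]
      have hj := j.isLt
      by_cases h1 : (j : ℕ) = k - 1
      · have e1 : (j : ℕ) + 1 = k := by omega
        rw [if_pos (by omega : (k - 1 : ℕ) = (j : ℕ)), if_pos h1,
          if_neg (by omega), if_neg (by omega), e1]
        have e2 : k - 1 + 1 = k := by omega
        rw [e2]; ring
      · by_cases h2 : (j : ℕ) = k
        · have e1 : (j : ℕ) + 1 = k + 1 := by omega
          rw [if_neg (by omega), if_pos (by omega : (k - 1 : ℕ) + 1 = (j : ℕ)),
            if_neg h1, if_pos h2, if_neg (by omega), e1]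
          have e2 : k - 1 + 1 = k := by omega
          rw [e2]; ring
        · by_cases h3 : (j : ℕ) + 2 = k
          · have e1 : (j : ℕ) + 1 = k - 1 := by omega
            rw [if_neg (by omega), if_neg (by omega),
              if_pos (by omega : (j : ℕ) + 1 = (k - 1 : ℕ)),
              if_neg h1, if_neg h2, if_pos h3, e1]
            ring
          · rw [if_neg (by omega), if_neg (by omega), if_neg (by omega),
              if_neg h1, if_neg h2, if_neg h3]
            ring
      
    have hsum3 : (∑ j : Fin n, if (j : ℕ) + 2 = k then b (k - 1) * x (k - 1) else 0)
        = b (k - 1) * x (k - 1) := by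
      by_cases hk2 : 2 ≤ k
      · simp only [show ∀ j : ℕ, (j + 2 = k) ↔ (j = k - 2) from fun j => by omega]
        exact sum_ite_fin n (k - 2) _ (by omega)
      · have hk1' : k = 1 := by omega
        subst hk1'
        simp [hb0, hx0]
    have hsum2 : (∑ j : Fin n, if (j : ℕ) = k then b k * x (k + 1) else 0)
        = b k * x (k + 1) := by
      apply sum_ite_fin
      intro hnk
      have hkn' : k = n := by omega
      rw [hkn', hbn, zero_mul]
    have hsum1 : (∑ j : Fin n, if (j : ℕ) = k - 1 then a k * x k else 0)
        = a k * x k := sum_ite_fin n (k - 1) _ (by omega)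
    rw [Finset.sum_congr rfl (fun j _ => hrow j), Finset.sum_add_distrib,
      Finset.sum_add_distrib, hsum1, hsum2, hsum3] at h
    have e : k - 1 + 1 = k := by omega
    rw [e] at h
    linarith
  -- one-step absolute-value inequality
  have habs : ∀ k, 1 ≤ k → k ≤ m →
      |a k - lam| * |x k| ≤ b (k - 1) * |x (k - 1)| + b k * |x (k + 1)| := by
    intro k h1 h2
    have hk := key k h1 (by omega)
    have hK : (a k - lam) * x k = -(b (k - 1) * x (k - 1) + b k * x (k + 1)) := by
      ring_nf
      ring_nf at hk
      linarith
    calc |a k - lam| * |x k| = |(a k - lam) * x k| := (abs_mul _ _).symm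
      _ = |b (k - 1) * x (k - 1) + b k * x (k + 1)| := by rw [hK, abs_neg]
      _ ≤ |b (k - 1) * x (k - 1)| + |b k * x (k + 1)| := abs_add_le _ _
      _ = b (k - 1) * |x (k - 1)| + b k * |x (k + 1)| := by
          rw [abs_mul, abs_mul, abs_of_nonneg (hbnn _ (by omega)),
            abs_of_nonneg (hbnn _ (by omega))]
  -- one-step decay
  have decay : ∀ k, 1 ≤ k → k ≤ m →
      |x k| ≤ b k / (|a k - lam| - b (k - 1)) * |x (k + 1)| := by
    intro k
    induction k with
    | zero => omega
    | succ k ih =>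
      intro _ hk
      have hgapk := hgap (k + 1) (by omega) hk
      have habsk := habs (k + 1) (by omega) hk
      simp only [Nat.add_sub_cancel] at hgapk habsk ⊢
      have hbk1 : 0 ≤ b (k + 1) := hbnn _ (by omega)
      have hden : 0 < |a (k + 1) - lam| - b k := by linarith
      have hprev : b k * |x k| ≤ b k * |x (k + 1)| := by
        rcases Nat.eq_zero_or_pos k with h | h
        · subst h; simp [hb0]
        · have ihk := ih (by omega) (by omega)
          have hgk := hgap k (by omega) (by omega)
          have hbk : 0 < b k := hbpos k h (by omega)
          have hdk : 0 < |a k - lam| - b (k - 1) := by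
            have := hbnn (k - 1) (by omega)
            linarith
          have hr : b k / (|a k - lam| - b (k - 1)) ≤ 1 := by
            rw [div_le_one hdk]; linarith
          have hx1 : |x k| ≤ |x (k + 1)| := by
            have hnn := abs_nonneg (x (k + 1))
            calc |x k| ≤ b k / (|a k - lam| - b (k - 1)) * |x (k + 1)| := ihk
              _ ≤ 1 * |x (k + 1)| := by
                  exact mul_le_mul_of_nonneg_right hr hnn
              _ = |x (k + 1)| := one_mul _
          exact mul_le_mul_of_nonneg_left hx1 hbk.le
      rw [div_mul_eq_mul_div, le_div_iff₀ hden]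
      nlinarith [habsk, hprev]
  -- chaining
  have hPnn : ∀ t, t ≤ m → (0:ℝ) ≤ ∏ i ∈ Finset.Icc 1 t, b i / (|a i - lam| - b (i - 1)) := by
    intro t ht
    apply Finset.prod_nonneg
    intro i hi
    rw [Finset.mem_Icc] at hi
    have hgi := hgap i hi.1 (le_trans hi.2 ht)
    have hbi := hbnn i (by omega)
    have hbi1 := hbnn (i - 1) (by omega)
    exact div_nonneg hbi (by linarith)
  have chain : ∀ t, t ≤ m →
      |x 1| ≤ (∏ i ∈ Finset.Icc 1 t, b i / (|a i - lam| - b (i - 1))) * |x (t + 1)| := by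
    intro t
    induction t with
    | zero => intro _; simp
    | succ t ih =>
      intro ht
      have h1 := ih (by omega)
      have h2 := decay (t + 1) (by omega) ht
      have hnn := hPnn t (by omega)
      calc |x 1| ≤ (∏ i ∈ Finset.Icc 1 t, b i / (|a i - lam| - b (i - 1))) * |x (t + 1)| := h1
        _ ≤ (∏ i ∈ Finset.Icc 1 t, b i / (|a i - lam| - b (i - 1)))
            * (b (t + 1) / (|a (t + 1) - lam| - b (t + 1 - 1)) * |x (t + 2)|) :=
          mul_le_mul_of_nonneg_left h2 hnn
        _ = (∏ i ∈ Finset.Icc 1 (t + 1), b i / (|a i - lam| - b (i - 1))) * |x (t + 2)| := by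
          rw [Finset.prod_Icc_succ_top (by omega : 1 ≤ t + 1)]
          ring
  -- the (m+1)-th component is at most 1
  have hsum : (∑ i : Fin n, ‖x ((i : ℕ) + 1)‖ ^ 2) = 1 := by
    have h := hunit
    unfold euclNorm at h
    have hnn : (0:ℝ) ≤ ∑ i : Fin n, ‖x ((i : ℕ) + 1)‖ ^ 2 :=
      Finset.sum_nonneg fun i _ => sq_nonneg _
    nlinarith [Real.sq_sqrt hnn]
  have hm1 : |x (m + 1)| ≤ 1 := by
    have hlt : m < n := by omega
    have hle : ‖x (m + 1)‖ ^ 2 ≤ 1 := by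
      rw [← hsum]
      exact Finset.single_le_sum (f := fun i : Fin n => ‖x ((i : ℕ) + 1)‖ ^ 2)
        (fun i _ => sq_nonneg _) (Finset.mem_univ (⟨m, hlt⟩ : Fin n))
    rw [Real.norm_eq_abs] at hle
    nlinarith [abs_nonneg (x (m + 1))]
  calc |x 1| ≤ (∏ i ∈ Finset.Icc 1 m, b i / (|a i - lam| - b (i - 1))) * |x (m + 1)| :=
        chain m le_rfl
    _ ≤ (∏ i ∈ Finset.Icc 1 m, b i / (|a i - lam| - b (i - 1))) * 1 :=
        mul_le_mul_of_nonneg_left hm1 (hPnn m le_rfl)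
    _ = _ := mul_one _
end

section
/- Let n > 4 and let W_{2n+1}^+ be the Wilkinson matrix: (2n+1)×(2n+1) symmetric tridiagonal with diagonal (n, n−1, …, 1, 0, 1, …, n−1, n) and off-diagonals 1. Then the largest eigenvalue λ_max of W_{2n+1}^+ satisfies n < λ_max < n+1. -/
open Matrix

/-- The `(2n+1)×(2n+1)` Wilkinson matrix `W⁺_{2n+1}`: symmetric tridiagonal with
diagonal `(n, n−1, …, 1, 0, 1, …, n−1, n)` and all off-diagonal entries 1. -/
noncomputable def wilkinson (n : ℕ) : Matrix (Fin (2 * n + 1)) (Fin (2 * n + 1)) ℝ :=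
  Matrix.of fun i j =>
    if (i : ℕ) = j then |(n : ℝ) - (i : ℕ)|
    else if (i : ℕ) + 1 = j ∨ (j : ℕ) + 1 = i then 1 else 0

namespace WilkAux

open Finset RealInnerProductSpace

noncomputable def tw (n k : ℕ) : ℝ :=
  if k = 0 then 7/8 else if k = 1 then 3/4 else
  if k = 2*n-2 then 4/3 else if k = 2*n-1 then 8/7 else 1

lemma tw_pos (n k : ℕ) : 0 < tw n k := by
  unfold tw; split_ifs <;> norm_num

noncomputable def Wnat (n i j : ℕ) : ℝ :=
  if i = j then |(n:ℝ) - i| else if i+1 = j ∨ j+1 = i then 1 else 0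

lemma amgm {t : ℝ} (ht : 0 < t) (a b : ℝ) : 2*(a*b) ≤ t*a^2 + (1/t)*b^2 := by
  have h : (2*(a*b)) * t ≤ (t*a^2 + (1/t)*b^2) * t := by
    have h2 : (1/t) * t = 1 := by field_simp
    nlinarith [sq_nonneg (t*a - b)]
  exact le_of_mul_le_mul_right h ht

noncomputable def padV {N : ℕ} (v : Fin N → ℝ) (k : ℕ) : ℝ :=
  if h : k < N then v ⟨k, h⟩ else 0

lemma tw_eval (n k : ℕ) (h0 : k ≠ 0) (h1 : k ≠ 1) (h2 : k ≠ 2*n-2) (h3 : k ≠ 2*n-1) :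
    tw n k = 1 := by
  unfold tw; rw [if_neg h0, if_neg h1, if_neg h2, if_neg h3]

lemma coeff_bound (n : ℕ) (hn : 4 < n) (i : ℕ) (hi : i < 2*n+1) :
    |(n:ℝ) - i| + (if i = 2*n then 0 else tw n i)
      + (if i = 0 then 0 else 1 / tw n (i-1)) ≤ (n:ℝ) + 25/28 := by
  have hn' : (5:ℝ) ≤ (n:ℝ) := by exact_mod_cast hn
  rcases (by omega : (3 ≤ i ∧ i ≤ 2*n-3) ∨
      (i = 0 ∨ i = 1 ∨ i = 2 ∨ i = 2*n-2 ∨ i = 2*n-1 ∨ i = 2*n)) with h | h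
  · -- generic middle case
    have c1 : (3:ℝ) ≤ (i:ℝ) := by exact_mod_cast h.1
    have c2 : (i:ℝ) + 3 ≤ 2*(n:ℝ) := by exact_mod_cast (by omega : i + 3 ≤ 2*n)
    have habs : |(n:ℝ) - i| ≤ (n:ℝ) - 3 := by
      rw [abs_le]; constructor <;> linarith
    have e1 : tw n i = 1 := tw_eval n i (by omega) (by omega) (by omega) (by omega)
    have e2 : tw n (i-1) = 1 := tw_eval n (i-1) (by omega) (by omega) (by omega) (by omega)
    rw [if_neg (by omega), if_neg (by omega), e1, e2]
    norm_num; linarith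
  · rcases h with h | h | h | h | h | h <;> subst h
    · -- i = 0
      rw [if_neg (by omega), if_pos rfl]
      have e : tw n 0 = 7/8 := by unfold tw; rw [if_pos rfl]
      rw [Nat.cast_zero, e, abs_of_nonneg (by linarith : (0:ℝ) ≤ (n:ℝ) - 0)]
      linarith
    · -- i = 1
      have e1 : tw n 1 = 3/4 := by unfold tw; rw [if_neg (by omega), if_pos rfl]
      have e2 : tw n 0 = 7/8 := by unfold tw; rw [if_pos rfl]
      rw [if_neg (by omega), if_neg (by omega)]
      simp only [e1]
      norm_num [e2]
      have : |(n:ℝ) - 1| = (n:ℝ) - 1 := abs_of_nonneg (by linarith)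
      rw [this]; linarith
    · -- i = 2
      have e1 : tw n 2 = 1 := tw_eval n 2 (by omega) (by omega) (by omega) (by omega)
      have e2 : tw n 1 = 3/4 := by unfold tw; rw [if_neg (by omega), if_pos rfl]
      rw [if_neg (by omega), if_neg (by omega)]
      norm_num [e1, e2]
      have : |(n:ℝ) - 2| = (n:ℝ) - 2 := abs_of_nonneg (by linarith)
      rw [this]; linarith
    · -- i = 2n-2
      have e1 : tw n (2*n-2) = 4/3 := by
        unfold tw; rw [if_neg (by omega), if_neg (by omega), if_pos rfl]
      have e2 : tw n (2*n-2-1) = 1 :=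
        tw_eval n _ (by omega) (by omega) (by omega) (by omega)
      rw [if_neg (by omega), if_neg (by omega), e1, e2]
      have hc : ((2*n-2 : ℕ) : ℝ) = 2*(n:ℝ) - 2 := by
        push_cast [Nat.cast_sub (by omega : 2 ≤ 2*n)]; ring
      have : |(n:ℝ) - (2*n-2:ℕ)| = (n:ℝ) - 2 := by
        rw [hc, abs_of_nonpos (by linarith)]; ring
      rw [this]; linarith
    · -- i = 2n-1
      have e1 : tw n (2*n-1) = 8/7 := by
        unfold tw; rw [if_neg (by omega), if_neg (by omega), if_neg (by omega), if_pos rfl]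
      have e2 : tw n (2*n-1-1) = 4/3 := by
        unfold tw; rw [if_neg (by omega), if_neg (by omega), if_pos (by omega)]
      rw [if_neg (by omega), if_neg (by omega), e1, e2]
      have hc : ((2*n-1 : ℕ) : ℝ) = 2*(n:ℝ) - 1 := by
        push_cast [Nat.cast_sub (by omega : 1 ≤ 2*n)]; ring
      have : |(n:ℝ) - (2*n-1:ℕ)| = (n:ℝ) - 1 := by
        rw [hc, abs_of_nonpos (by linarith)]; ring
      rw [this]; linarith
    · -- i = 2n
      have e2 : tw n (2*n-1) = 8/7 := by
        unfold tw; rw [if_neg (by omega), if_neg (by omega), if_neg (by omega), if_pos rfl]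
      rw [if_pos rfl, if_neg (by omega), e2]
      have hc : ((2*n : ℕ) : ℝ) = 2*(n:ℝ) := by push_cast; ring
      have : |(n:ℝ) - (2*n:ℕ)| = (n:ℝ) := by
        rw [hc, abs_of_nonpos (by linarith)]; ring
      rw [this]; linarith

lemma key (n : ℕ) (hn : 4 < n) (V : ℕ → ℝ) (hV0 : V (2*n+1) = 0) :
    ∑ i ∈ range (2*n+1), ∑ j ∈ range (2*n+1), V i * (Wnat n i j * V j)
      ≤ ((n:ℝ) + 25/28) * ∑ i ∈ range (2*n+1), V i ^ 2 := by
  have inner_eval : ∀ i ∈ range (2*n+1),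
      ∑ j ∈ range (2*n+1), V i * (Wnat n i j * V j)
        = |(n:ℝ) - i| * V i ^ 2 + V i * V (i+1)
          + (if i = 0 then 0 else V i * V (i-1)) := by
    intro i hi
    rw [mem_range] at hi
    rw [← Finset.mul_sum]
    have split : ∀ j, Wnat n i j * V j
        = (if j = i then |(n:ℝ) - i| * V j else 0)
          + ((if j = i+1 then V j else 0) + (if j + 1 = i then V j else 0)) := by
      intro j
      unfold Wnat
      split_ifs <;> first | ring1 | (exfalso; omega)
    rw [Finset.sum_congr rfl (fun j _ => split j), Finset.sum_add_distrib,
      Finset.sum_add_distrib, Finset.sum_ite_eq' (range (2*n+1)) i,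
      Finset.sum_ite_eq' (range (2*n+1)) (i+1), if_pos (mem_range.2 hi)]
    have h2 : (if i + 1 ∈ range (2*n+1) then V (i+1) else 0) = V (i+1) := by
      rcases (by omega : i + 1 < 2*n+1 ∨ i + 1 = 2*n+1) with h | h
      · rw [if_pos (mem_range.2 h)]
      · rw [if_neg (by simp [h]), h, hV0]
    rw [h2]
    have h3 : ∑ j ∈ range (2*n+1), (if j + 1 = i then V j else 0)
        = if i = 0 then 0 else V (i-1) := by
      rcases Nat.eq_zero_or_pos i with h | h
      · subst h
        rw [if_pos rfl]
        exact Finset.sum_eq_zero fun j _ => by simp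
      · obtain ⟨m, rfl⟩ : ∃ m, i = m + 1 := ⟨i - 1, by omega⟩
        rw [if_neg (by omega)]
        have : ∀ j ∈ range (2*n+1), (if j + 1 = m + 1 then V j else 0)
            = if j = m then V j else 0 := by
          intro j _
          exact if_congr (by omega) rfl rfl
        rw [Finset.sum_congr rfl this, Finset.sum_ite_eq' (range (2*n+1)) m,
          if_pos (mem_range.2 (by omega))]
        simp
    rw [h3]
    split_ifs <;> ring
  rw [Finset.sum_congr rfl inner_eval, Finset.sum_add_distrib, Finset.sum_add_distrib]
  -- handle the two cross-term sums
  have hB : ∑ i ∈ range (2*n+1), V i * V (i+1) = ∑ i ∈ range (2*n), V i * V (i+1) := by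
    rw [Finset.sum_range_succ, hV0, mul_zero, add_zero]
  have hC : ∑ i ∈ range (2*n+1), (if i = 0 then 0 else V i * V (i-1))
      = ∑ i ∈ range (2*n), V (i+1) * V i := by
    rw [Finset.sum_range_succ']
    simp
  rw [hB, hC, add_assoc, ← Finset.sum_add_distrib]
  have cross : ∑ i ∈ range (2*n), (V i * V (i+1) + V (i+1) * V i)
      ≤ ∑ i ∈ range (2*n), (tw n i * V i ^ 2 + (1/tw n i) * V (i+1) ^ 2) := by
    refine Finset.sum_le_sum fun i _ => ?_
    have := amgm (tw_pos n i) (V i) (V (i+1))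
    linarith
  have cross2 : ∑ i ∈ range (2*n), (tw n i * V i ^ 2 + (1/tw n i) * V (i+1) ^ 2)
      = ∑ i ∈ range (2*n+1), ((if i = 2*n then 0 else tw n i * V i ^ 2)
          + (if i = 0 then 0 else (1/tw n (i-1)) * V i ^ 2)) := by
    rw [Finset.sum_add_distrib, Finset.sum_add_distrib]
    congr 1
    · rw [Finset.sum_range_succ, if_pos rfl, add_zero]
      exact Finset.sum_congr rfl fun i hi => by
        have := mem_range.1 hi
        rw [if_neg (by omega)]
    · rw [Finset.sum_range_succ']
      simp
  calc ∑ i ∈ range (2*n+1), |(n:ℝ) - i| * V i ^ 2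
        + ∑ i ∈ range (2*n), (V i * V (i+1) + V (i+1) * V i)
      ≤ ∑ i ∈ range (2*n+1), |(n:ℝ) - i| * V i ^ 2
        + ∑ i ∈ range (2*n+1), ((if i = 2*n then 0 else tw n i * V i ^ 2)
          + (if i = 0 then 0 else (1/tw n (i-1)) * V i ^ 2)) := by
        rw [← cross2]; linarith
    _ = ∑ i ∈ range (2*n+1),
          ((|(n:ℝ) - i| + (if i = 2*n then 0 else tw n i)
            + (if i = 0 then 0 else 1 / tw n (i-1))) * V i ^ 2) := by
        rw [← Finset.sum_add_distrib]
        exact Finset.sum_congr rfl fun i _ => by split_ifs <;> ring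
    _ ≤ ∑ i ∈ range (2*n+1), ((n:ℝ) + 25/28) * V i ^ 2 := by
        refine Finset.sum_le_sum fun i hi => ?_
        exact mul_le_mul_of_nonneg_right
          (coeff_bound n hn i (mem_range.1 hi)) (sq_nonneg _)
    _ = ((n:ℝ) + 25/28) * ∑ i ∈ range (2*n+1), V i ^ 2 := by rw [Finset.mul_sum]

lemma padV_coe {N : ℕ} (v : Fin N → ℝ) (i : Fin N) : padV v i = v i := by
  simp [padV, i.isLt]

lemma bridge (n : ℕ) (v : Fin (2*n+1) → ℝ) :
    v ⬝ᵥ (wilkinson n *ᵥ v) =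
      ∑ i ∈ range (2*n+1), ∑ j ∈ range (2*n+1),
        padV v i * (Wnat n i j * padV v j) := by
  rw [Finset.sum_range (fun i => ∑ j ∈ range (2*n+1), padV v i * (Wnat n i j * padV v j))]
  simp only [Finset.sum_range (fun j => padV v _ * (Wnat n _ j * padV v j))]
  rw [dotProduct]
  refine Finset.sum_congr rfl fun i _ => ?_
  rw [mulVec, dotProduct, Finset.mul_sum]
  refine Finset.sum_congr rfl fun j _ => ?_
  rw [padV_coe, padV_coe]
  rfl

lemma dot_self_bridge (N : ℕ) (v : Fin N → ℝ) :
    v ⬝ᵥ v = ∑ i ∈ range N, padV v i ^ 2 := by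
  rw [Finset.sum_range (fun k => padV v k ^ 2), dotProduct]
  exact Finset.sum_congr rfl fun i _ => by rw [padV_coe, sq]

lemma wilk_symm (n : ℕ) : (wilkinson n)ᵀ = wilkinson n := by
  ext i j
  simp only [transpose_apply, wilkinson, of_apply]
  rcases eq_or_ne (i:ℕ) (j:ℕ) with h | h
  · rw [if_pos h.symm, if_pos h, h]
  · rw [if_neg (Ne.symm h), if_neg h]
    exact if_congr or_comm rfl rfl

section Spectral
variable (n : ℕ) (hW : (wilkinson n).IsHermitian)

lemma inner_dot (u v : EuclideanSpace ℝ (Fin (2*n+1))) : ⟪u, v⟫ = u ⬝ᵥ v := by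
  simp [PiLp.inner_apply, RCLike.inner_apply, dotProduct, mul_comm]

lemma eigvec_dot (k : Fin (2*n+1)) (y : Fin (2*n+1) → ℝ) :
    (hW.eigenvectorBasis k : Fin (2*n+1) → ℝ) ⬝ᵥ (wilkinson n *ᵥ y)
      = hW.eigenvalues k * ((hW.eigenvectorBasis k : Fin (2*n+1) → ℝ) ⬝ᵥ y) := by
  have h5 : wilkinson n *ᵥ (hW.eigenvectorBasis k : Fin (2*n+1) → ℝ)
      = hW.eigenvalues k • (hW.eigenvectorBasis k : Fin (2*n+1) → ℝ) :=
    hW.mulVec_eigenvectorBasis k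
  rw [dotProduct_mulVec, ← mulVec_transpose, wilk_symm, h5, smul_dotProduct, smul_eq_mul]

lemma rayleigh_le (M : ℝ) (hM : ∀ k, hW.eigenvalues k ≤ M) (x : Fin (2*n+1) → ℝ) :
    x ⬝ᵥ (wilkinson n *ᵥ x) ≤ M * (x ⬝ᵥ x) := by
  set b := hW.eigenvectorBasis with hb
  let X : EuclideanSpace ℝ (Fin (2*n+1)) := WithLp.toLp 2 x
  let Y : EuclideanSpace ℝ (Fin (2*n+1)) := WithLp.toLp 2 (wilkinson n *ᵥ x)
  have e1 : x ⬝ᵥ (wilkinson n *ᵥ x)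
      = ∑ k, hW.eigenvalues k * ((b k : Fin (2*n+1) → ℝ) ⬝ᵥ x)^2 := by
    calc x ⬝ᵥ (wilkinson n *ᵥ x)
        = ⟪X, Y⟫ := (inner_dot n X Y).symm
      _ = ∑ k, ⟪X, b k⟫ * ⟪b k, Y⟫ := (b.sum_inner_mul_inner _ _).symm
      _ = ∑ k, hW.eigenvalues k * ((b k : Fin (2*n+1) → ℝ) ⬝ᵥ x)^2 := by
          refine Finset.sum_congr rfl fun k _ => ?_
          rw [inner_dot, inner_dot]
          simp only [X, Y, WithLp.ofLp_toLp]
          rw [eigvec_dot n hW k x,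
            dotProduct_comm x (b k : Fin (2*n+1) → ℝ)]
          ring
  have e2 : x ⬝ᵥ x = ∑ k, ((b k : Fin (2*n+1) → ℝ) ⬝ᵥ x)^2 := by
    calc x ⬝ᵥ x
        = ⟪X, X⟫ := (inner_dot n X X).symm
      _ = ∑ k, ⟪X, b k⟫ * ⟪b k, X⟫ := (b.sum_inner_mul_inner _ _).symm
      _ = ∑ k, ((b k : Fin (2*n+1) → ℝ) ⬝ᵥ x)^2 := by
          refine Finset.sum_congr rfl fun k _ => ?_
          rw [inner_dot, inner_dot]
          simp only [X, WithLp.ofLp_toLp]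
          rw [dotProduct_comm x (b k : Fin (2*n+1) → ℝ)]
          ring
  rw [e1, e2, Finset.mul_sum]
  exact Finset.sum_le_sum fun k _ => mul_le_mul_of_nonneg_right (hM k) (sq_nonneg _)

lemma eigvec_norm (k : Fin (2*n+1)) :
    (hW.eigenvectorBasis k : Fin (2*n+1) → ℝ) ⬝ᵥ (hW.eigenvectorBasis k) = 1 := by
  rw [← inner_dot]
  simpa using orthonormal_iff_ite.1 hW.eigenvectorBasis.orthonormal k k

lemma eig_le_ithEig (k : Fin (2*n+1)) :
    hW.eigenvalues k ≤ ithEig hW ⟨2*n, by simp⟩ := by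
  set f := hW.eigenvalues ∘ (Fintype.equivFin (Fin (2*n+1))).symm with hf
  have mono := Tuple.monotone_sort f
  have hk : hW.eigenvalues k
      = (f ∘ Tuple.sort f) ((Tuple.sort f).symm ((Fintype.equivFin (Fin (2*n+1))) k)) := by
    simp [hf]
  rw [hk]
  refine mono ?_
  have h2 : ((Tuple.sort f).symm ((Fintype.equivFin (Fin (2*n+1))) k)).1 < 2*n+1 := by
    simpa using ((Tuple.sort f).symm ((Fintype.equivFin (Fin (2*n+1))) k)).isLt
  exact Fin.le_def.2 (Nat.lt_succ_iff.1 h2)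

lemma ithEig_attained : ∃ k, hW.eigenvalues k = ithEig hW ⟨2*n, by simp⟩ :=
  ⟨(Fintype.equivFin (Fin (2*n+1))).symm
    (Tuple.sort (hW.eigenvalues ∘ (Fintype.equivFin (Fin (2*n+1))).symm) ⟨2*n, by simp⟩), rfl⟩

end Spectral


lemma qf_upper (n : ℕ) (hn : 4 < n) (v : Fin (2*n+1) → ℝ) :
    v ⬝ᵥ (wilkinson n *ᵥ v) ≤ ((n:ℝ) + 25/28) * (v ⬝ᵥ v) := by
  rw [bridge, dot_self_bridge]
  exact key n hn (padV v) (by rw [padV]; rw [dif_neg (by omega)])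

noncomputable def testv (n : ℕ) : Fin (2*n+1) → ℝ := fun i => if (i:ℕ) < 2 then 1 else 0

lemma padV_testv (n k : ℕ) (hn : 0 < n) : padV (testv n) k = if k < 2 then (1:ℝ) else 0 := by
  rcases lt_or_ge k (2*n+1) with h | h
  · rw [padV, dif_pos h]; rfl
  · rw [padV, dif_neg (by omega), if_neg (by omega)]

lemma sumX2 (n : ℕ) (hn : 4 < n) :
    ∑ i ∈ range (2*n+1), (if i < 2 then (1:ℝ) else 0) ^ 2 = 2 := by
  rw [← Finset.sum_subset (Finset.range_subset_range.2 (by omega : 2 ≤ 2*n+1))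
    (fun x _ hx => by rw [mem_range, not_lt] at hx; rw [if_neg (by omega)]; norm_num)]
  rw [Finset.sum_range_succ, Finset.sum_range_one]
  norm_num

lemma sumXQ (n : ℕ) (hn : 4 < n) :
    ∑ i ∈ range (2*n+1), ∑ j ∈ range (2*n+1),
      (if i < 2 then (1:ℝ) else 0) * (Wnat n i j * (if j < 2 then (1:ℝ) else 0))
    = 2*(n:ℝ)+1 := by
  have hinner : ∀ i, ∑ j ∈ range (2*n+1),
      (if i < 2 then (1:ℝ) else 0) * (Wnat n i j * (if j < 2 then (1:ℝ) else 0))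
      = (if i < 2 then (1:ℝ) else 0) * (Wnat n i 0 + Wnat n i 1) := by
    intro i
    rw [← Finset.sum_subset (Finset.range_subset_range.2 (by omega : 2 ≤ 2*n+1))
      (fun x _ hx => by rw [mem_range, not_lt] at hx
                        rw [if_neg (by omega : ¬ x < 2), mul_zero, mul_zero])]
    rw [Finset.sum_range_succ, Finset.sum_range_one]
    norm_num [mul_add]
  rw [Finset.sum_congr rfl fun i _ => hinner i]
  rw [← Finset.sum_subset (Finset.range_subset_range.2 (by omega : 2 ≤ 2*n+1))
    (fun x _ hx => by rw [mem_range, not_lt] at hx; rw [if_neg (by omega), zero_mul])]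
  rw [Finset.sum_range_succ, Finset.sum_range_one]
  have W00 : Wnat n 0 0 = (n:ℝ) := by simp [Wnat]
  have W01 : Wnat n 0 1 = 1 := by norm_num [Wnat]
  have W10 : Wnat n 1 0 = 1 := by norm_num [Wnat]
  have W11 : Wnat n 1 1 = (n:ℝ) - 1 := by
    have h4 : (4:ℝ) < n := by exact_mod_cast hn
    have : |(n:ℝ) - 1| = (n:ℝ) - 1 := abs_of_nonneg (by linarith)
    simp [Wnat, this]
  rw [W00, W01, W10, W11]
  norm_num
  ring


end WilkAux

open WilkAux in
/-- For `n > 4`, the largest eigenvalue of Wilkinson's matrix `W⁺_{2n+1}`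
lies strictly between `n` and `n+1`. -/
theorem stmt_12 (n : ℕ) (hn : 4 < n) (hW : (wilkinson n).IsHermitian) :
    (n : ℝ) < ithEig hW ⟨2 * n, by simp⟩ ∧
      ithEig hW ⟨2 * n, by simp⟩ < (n : ℝ) + 1 := by
  have hcast : (4:ℝ) < n := by exact_mod_cast hn
  have hmax := eig_le_ithEig n hW
  constructor
  · have hr := rayleigh_le n hW _ hmax (testv n)
    have hq : testv n ⬝ᵥ (wilkinson n *ᵥ testv n) = 2*(n:ℝ)+1 := by
      rw [bridge, Finset.sum_congr rfl fun i _ => Finset.sum_congr rfl fun j _ => by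
        rw [padV_testv _ _ (by omega), padV_testv _ _ (by omega)]]
      exact sumXQ n hn
    have hx2 : testv n ⬝ᵥ testv n = 2 := by
      rw [dot_self_bridge, Finset.sum_congr rfl fun i _ => by rw [padV_testv _ _ (by omega)]]
      exact sumX2 n hn
    rw [hq, hx2] at hr
    linarith
  · obtain ⟨k, hk⟩ := ithEig_attained n hW
    rw [← hk]
    have h1 := eigvec_norm n hW k
    have h5 : wilkinson n *ᵥ (hW.eigenvectorBasis k : Fin (2*n+1) → ℝ)
        = hW.eigenvalues k • (hW.eigenvectorBasis k : Fin (2*n+1) → ℝ) :=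
      hW.mulVec_eigenvectorBasis k
    have h6 : (hW.eigenvectorBasis k : Fin (2*n+1) → ℝ)
        ⬝ᵥ (wilkinson n *ᵥ (hW.eigenvectorBasis k : Fin (2*n+1) → ℝ))
        = hW.eigenvalues k := by
      rw [h5, dotProduct_smul, smul_eq_mul, h1, mul_one]
    have h7 := qf_upper n hn (hW.eigenvectorBasis k : Fin (2*n+1) → ℝ)
    rw [h6, h1, mul_one] at h7
    linarith
end

section
/- Let A = [[A1, 0],[0, A2]] and Â = [[A1, t],[t^T, D]] where A2 = V D V^T with D diagonal and t = b V(1,:)^T for a scalar b > 0 (the aggressive early deflation setup). If the j-th diagonal entry d_j of D satisfies min_{λ ∈ spec(A1)} |d_j − λ| > 2‖t‖₂ and the j-th component |t_j| of t is small, then the eigenvalue of Â nearest d_j satisfies |λ̂ − d_j| ≤ 2|t_j| · τ + ‖t‖₂ τ², where τ = ‖t‖₂/(min_{λ∈spec(A1)} |d_j − λ| − 2‖t‖₂). -/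
open Matrix

/-- For a real symmetric matrix, an approximate eigenpair with small residual
gives a nearby eigenvalue. -/
lemma eig_close_of_residual {n : Type*} [Fintype n] [DecidableEq n] [Nonempty n]
    {S : Matrix n n ℝ} (hS : S.IsHermitian) (x : n → ℝ) (μ c : ℝ)
    (hx : 1 ≤ ∑ i, x i ^ 2) (hc : 0 ≤ c)
    (hr : ∑ i, ((S *ᵥ x) i - μ * x i) ^ 2 ≤ c ^ 2) :
    ∃ p, |hS.eigenvalues p - μ| ≤ c := by
  classical
  set b := hS.eigenvectorBasis with hb
  set ν := hS.eigenvalues with hν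
  set X : EuclideanSpace ℝ n := WithLp.toLp 2 x with hX
  set R : EuclideanSpace ℝ n := WithLp.toLp 2 (fun i => (S *ᵥ x) i - μ * x i) with hR
  have hinner : ∀ (y : EuclideanSpace ℝ n) (q : n), b.repr y q = ∑ i, b q i * y i := by
    intro y q
    rw [b.repr_apply_apply]
    simp [PiLp.inner_apply, RCLike.inner_apply, conj_trivial, mul_comm]
  have hmv : ∀ q, ∑ i, b q i * (S *ᵥ x) i = ν q * ∑ i, b q i * x i := by
    intro q
    have hsymm : ∀ i l, S i l = S l i := by
      intro i l
      simpa using (hS.apply l i)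
    have step : ∀ l, ∑ i, S i l * b q i = ν q * b q l := by
      intro l
      have h1 : ∑ i, S i l * b q i = (S *ᵥ ⇑(b q)) l := by
        simp only [mulVec, dotProduct]
        exact Finset.sum_congr rfl fun i _ => by rw [hsymm i l]
      rw [h1, hS.mulVec_eigenvectorBasis]
      rfl
    calc ∑ i, b q i * (S *ᵥ x) i
        = ∑ i, ∑ l, b q i * (S i l * x l) := by
          simp only [mulVec, dotProduct, Finset.mul_sum]
      _ = ∑ l, ∑ i, b q i * (S i l * x l) := Finset.sum_comm
      _ = ∑ l, (∑ i, S i l * b q i) * x l := by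
          refine Finset.sum_congr rfl fun l _ => ?_
          rw [Finset.sum_mul]
          exact Finset.sum_congr rfl fun i _ => by ring
      _ = ∑ l, (ν q * b q l) * x l := by
          refine Finset.sum_congr rfl fun l _ => by rw [step l]
      _ = ν q * ∑ i, b q i * x i := by
          rw [Finset.mul_sum]
          exact Finset.sum_congr rfl fun i _ => by ring
  have hreprR : ∀ q, b.repr R q = (ν q - μ) * b.repr X q := by
    intro q
    rw [hinner R q, hinner X q]
    have : ∑ i, b q i * R i = ∑ i, (b q i * (S *ᵥ x) i - μ * (b q i * x i)) := by
      refine Finset.sum_congr rfl fun i _ => ?_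
      show b q i * ((S *ᵥ x) i - μ * x i) = _
      ring
    rw [this, Finset.sum_sub_distrib, ← Finset.mul_sum, hmv q]
    ring
  have hnorm : ∀ (y : EuclideanSpace ℝ n), ∑ q, (b.repr y q) ^ 2 = ∑ i, (y i) ^ 2 := by
    intro y
    have h1 : ‖b.repr y‖ = ‖y‖ := b.repr.norm_map y
    have h2 : ‖b.repr y‖ ^ 2 = ∑ q, (b.repr y q) ^ 2 := by
      rw [EuclideanSpace.norm_eq, Real.sq_sqrt (by positivity)]
      simp [Real.norm_eq_abs, sq_abs]
    have h3 : ‖y‖ ^ 2 = ∑ i, (y i) ^ 2 := by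
      rw [EuclideanSpace.norm_eq, Real.sq_sqrt (by positivity)]
      simp [Real.norm_eq_abs, sq_abs]
    rw [← h2, h1, h3]
  obtain ⟨p, hp⟩ := Finite.exists_min (fun q => |ν q - μ|)
  refine ⟨p, ?_⟩
  have hsum : (ν p - μ) ^ 2 * ∑ q, (b.repr X q) ^ 2 ≤ ∑ q, (b.repr R q) ^ 2 := by
    rw [Finset.mul_sum]
    refine Finset.sum_le_sum fun q _ => ?_
    rw [hreprR q]
    have h1 : (ν p - μ) ^ 2 ≤ (ν q - μ) ^ 2 := by
      rw [← sq_abs, ← sq_abs (ν q - μ)]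
      exact pow_le_pow_left₀ (abs_nonneg _) (hp q) 2
    nlinarith [sq_nonneg (b.repr X q)]
  have hXx : ∑ q, (b.repr X q) ^ 2 = ∑ i, x i ^ 2 := hnorm X
  have hRr : ∑ q, (b.repr R q) ^ 2 = ∑ i, ((S *ᵥ x) i - μ * x i) ^ 2 := hnorm R
  have key : (ν p - μ) ^ 2 ≤ c ^ 2 := by
    have h4 : (ν p - μ) ^ 2 ≤ (ν p - μ) ^ 2 * ∑ q, (b.repr X q) ^ 2 := by
      rw [hXx]
      nlinarith [sq_nonneg (ν p - μ)]
    calc (ν p - μ) ^ 2 ≤ (ν p - μ) ^ 2 * ∑ q, (b.repr X q) ^ 2 := h4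
      _ ≤ ∑ q, (b.repr R q) ^ 2 := hsum
      _ = ∑ i, ((S *ᵥ x) i - μ * x i) ^ 2 := hRr
      _ ≤ c ^ 2 := hr
  nlinarith [abs_nonneg (ν p - μ), sq_abs (ν p - μ)]

/-- Aggressive early deflation bound: for the arrowhead matrix
`Â = [[A1, T],[Tᵀ, D]]` with spike `t = b·V(1,:)`, the eigenvalue of `Â`
nearest a diagonal entry `d j` of `D` is within `2|t_j| τ + ‖t‖ τ²` of `d j`,
where `τ = ‖t‖/(min_λ∈spec(A1) |d_j − λ| − 2‖t‖)`. -/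
theorem stmt_19 {m k : ℕ} (hk : 1 ≤ k)
    (A1 : Matrix (Fin m) (Fin m) ℝ) (hA1 : A1.IsHermitian)
    (d : Fin k → ℝ) (V : Matrix (Fin k) (Fin k) ℝ) (hV : Vᵀ * V = 1)
    (b : ℝ) (hb : 0 < b)
    (t : Fin k → ℝ) (ht : t = fun j => b * V ⟨0, hk⟩ j)
    (T : Matrix (Fin m) (Fin k) ℝ)
    (hT : T = Matrix.of fun (i : Fin m) (j : Fin k) => if (i : ℕ) = 0 then t j else 0)
    (hAhat : (fromBlocks A1 T Tᵀ (Matrix.diagonal d)).IsHermitian)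
    (j : Fin k)
    (hgap : (⨅ l, |d j - hA1.eigenvalues l|) > 2 * euclNorm t) :
    ∃ i, |ithEig hAhat i - d j| ≤
      2 * |t j| * (euclNorm t / ((⨅ l, |d j - hA1.eigenvalues l|) - 2 * euclNorm t))
      + euclNorm t *
        (euclNorm t / ((⨅ l, |d j - hA1.eigenvalues l|) - 2 * euclNorm t)) ^ 2 := by
  classical
  have hε : 0 ≤ euclNorm t := Real.sqrt_nonneg _
  -- m must be positive
  rcases Nat.eq_zero_or_pos m with hm0 | hm
  · exfalso
    haveI : IsEmpty (Fin m) := ⟨fun i => absurd i.isLt (by omega)⟩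
    rw [Real.iInf_of_isEmpty] at hgap
    linarith
  set g := (⨅ l, |d j - hA1.eigenvalues l|) with hgdef
  set ε := euclNorm t with hεdef
  have hg0 : 0 < g := lt_of_le_of_lt (by linarith : (0:ℝ) ≤ 2 * ε) hgap
  have hgle : ∀ l, g ≤ |d j - hA1.eigenvalues l| := by
    intro l
    exact ciInf_le ⟨0, by rintro y ⟨l, rfl⟩; exact abs_nonneg _⟩ l
  set m0 : Fin m := ⟨0, hm⟩ with hm0def
  set μA := hA1.eigenvalues with hμAdef
  set B1 := hA1.eigenvectorBasis with hB1def
  set E0 : EuclideanSpace ℝ (Fin m) := WithLp.toLp 2 (Pi.single m0 1) with hE0def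
  have hne : ∀ l, d j - μA l ≠ 0 := by
    intro l h
    have := hgle l
    rw [h] at this
    simp at this
    linarith
  have hcc : ∀ l, B1.repr E0 l = B1 l m0 := by
    intro l
    rw [B1.repr_apply_apply]
    have h1 : (inner ℝ (B1 l) E0 : ℝ) = ∑ i, B1 l i * E0 i := by
      simp [PiLp.inner_apply, RCLike.inner_apply, conj_trivial, mul_comm]
    rw [h1]
    have h2 : ∀ i : Fin m, B1 l i * E0 i = if i = m0 then B1 l i else 0 := by
      intro i
      show B1 l i * (Pi.single m0 1 : Fin m → ℝ) i = _
      simp [Pi.single_apply]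
    rw [Finset.sum_congr rfl fun i _ => h2 i,
      Finset.sum_ite_eq' Finset.univ m0 fun i => B1 l i]
    simp
  have hexp : ∀ i, ∑ l, B1.repr E0 l * B1 l i = E0 i := by
    intro i
    have h := B1.sum_repr E0
    have h2 : (∑ l, B1.repr E0 l • B1 l) i = ∑ l, B1.repr E0 l * B1 l i := by
      show ((WithLp.linearEquiv 2 ℝ (Fin m → ℝ)) (∑ l, B1.repr E0 l • B1 l)) i = _
      rw [map_sum]
      simp [WithLp.linearEquiv, Finset.sum_apply]
    have h3 : (∑ l, B1.repr E0 l • B1 l) i = E0 i :=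
      congrArg (fun v : EuclideanSpace ℝ (Fin m) => v i) h
    rw [h2] at h3
    exact h3
  have hpar : ∑ l, (B1.repr E0 l) ^ 2 = 1 := by
    have h1 : ‖B1.repr E0‖ = ‖E0‖ := B1.repr.norm_map E0
    have h2 : ‖B1.repr E0‖ ^ 2 = ∑ l, (B1.repr E0 l) ^ 2 := by
      rw [EuclideanSpace.norm_eq, Real.sq_sqrt (by positivity)]
      simp [Real.norm_eq_abs, sq_abs]
    have h3 : ‖E0‖ ^ 2 = ∑ i, (E0 i) ^ 2 := by
      rw [EuclideanSpace.norm_eq, Real.sq_sqrt (by positivity)]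
      simp [Real.norm_eq_abs, sq_abs]
    have h4 : ∑ i, (E0 i) ^ 2 = 1 := by
      have h5 : ∀ i : Fin m, (E0 i) ^ 2 = if i = m0 then 1 else 0 := by
        intro i
        show ((Pi.single m0 1 : Fin m → ℝ) i) ^ 2 = _
        simp [Pi.single_apply]
      rw [Finset.sum_congr rfl fun i _ => h5 i,
        Finset.sum_ite_eq' Finset.univ m0 fun _ => (1:ℝ)]
      simp
    rw [← h2, h1, h3, h4]
  set w : Fin m → ℝ := fun i => t j * ∑ l, B1.repr E0 l / (d j - μA l) * B1 l i with hwdef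
  have hA1B : ∀ l (i : Fin m), ∑ i1, A1 i i1 * B1 l i1 = μA l * B1 l i := by
    intro l i
    have h1 : ∑ i1, A1 i i1 * B1 l i1 = (A1 *ᵥ ⇑(B1 l)) i := rfl
    rw [h1, hA1.mulVec_eigenvectorBasis]
    rfl
  have hA1w : ∀ i, (A1 *ᵥ w) i = t j * ∑ l, B1.repr E0 l / (d j - μA l) * (μA l * B1 l i) := by
    intro i
    calc (A1 *ᵥ w) i
        = ∑ i1, A1 i i1 * (t j * ∑ l, B1.repr E0 l / (d j - μA l) * B1 l i1) := rfl
      _ = ∑ i1, ∑ l, t j * (B1.repr E0 l / (d j - μA l)) * (A1 i i1 * B1 l i1) := by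
          refine Finset.sum_congr rfl fun i1 _ => ?_
          simp only [Finset.mul_sum]
          exact Finset.sum_congr rfl fun l _ => by ring
      _ = ∑ l, ∑ i1, t j * (B1.repr E0 l / (d j - μA l)) * (A1 i i1 * B1 l i1) :=
          Finset.sum_comm
      _ = ∑ l, t j * (B1.repr E0 l / (d j - μA l)) * (μA l * B1 l i) := by
          refine Finset.sum_congr rfl fun l _ => ?_
          rw [← Finset.mul_sum, hA1B l i]
      _ = t j * ∑ l, B1.repr E0 l / (d j - μA l) * (μA l * B1 l i) := by
          rw [Finset.mul_sum]
          exact Finset.sum_congr rfl fun l _ => by ring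
  have htop : ∀ i, (A1 *ᵥ w) i + t j * E0 i - d j * w i = 0 := by
    intro i
    rw [hA1w i]
    have h2 : ∑ l, B1.repr E0 l / (d j - μA l) * (μA l * B1 l i)
        - d j * ∑ l, B1.repr E0 l / (d j - μA l) * B1 l i
        = -∑ l, B1.repr E0 l * B1 l i := by
      rw [Finset.mul_sum, ← Finset.sum_sub_distrib, ← Finset.sum_neg_distrib]
      refine Finset.sum_congr rfl fun l _ => ?_
      field_simp [hne l]
      ring
    have h3 := hexp i
    show t j * (∑ l, B1.repr E0 l / (d j - μA l) * (μA l * B1 l i)) + t j * E0 i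
        - d j * (t j * ∑ l, B1.repr E0 l / (d j - μA l) * B1 l i) = 0
    linear_combination t j * h2 - t j * h3
  have hw0 : |w m0| ≤ |t j| / g := by
    have hssum : |∑ l, B1.repr E0 l / (d j - μA l) * B1 l m0| ≤ 1 / g := by
      calc |∑ l, B1.repr E0 l / (d j - μA l) * B1 l m0|
          ≤ ∑ l, |B1.repr E0 l / (d j - μA l) * B1 l m0| := Finset.abs_sum_le_sum_abs _ _
        _ ≤ ∑ l, (B1.repr E0 l) ^ 2 / g := by
            refine Finset.sum_le_sum fun l _ => ?_
            rw [← hcc l]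
            have heq : |B1.repr E0 l / (d j - μA l) * B1.repr E0 l|
                = (B1.repr E0 l) ^ 2 / |d j - μA l| := by
              rw [abs_mul, abs_div, div_mul_eq_mul_div, abs_mul_abs_self]
              ring_nf
            rw [heq]
            exact div_le_div_of_nonneg_left (sq_nonneg _) hg0 (hgle l)
        _ = (∑ l, (B1.repr E0 l) ^ 2) / g := by rw [← Finset.sum_div]
        _ = 1 / g := by rw [hpar]
    have habs : |w m0| = |t j| * |∑ l, B1.repr E0 l / (d j - μA l) * B1 l m0| := by
      show |t j * ∑ l, B1.repr E0 l / (d j - μA l) * B1 l m0| = _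
      exact abs_mul _ _
    rw [habs]
    calc |t j| * |∑ l, B1.repr E0 l / (d j - μA l) * B1 l m0| ≤ |t j| * (1 / g) :=
          mul_le_mul_of_nonneg_left hssum (abs_nonneg _)
      _ = |t j| / g := by ring
  set x : (Fin m ⊕ Fin k) → ℝ := Sum.elim w (Pi.single j 1) with hxdef
  have hTsingle : ∀ i : Fin m, (T *ᵥ Pi.single j 1) i = t j * E0 i := by
    intro i
    rw [mulVec_single_one]
    show T i j = t j * E0 i
    rw [hT]
    show (if (i : ℕ) = 0 then t j else 0) = t j * (Pi.single m0 1 : Fin m → ℝ) i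
    by_cases hi : i = m0
    · subst hi
      simp [hm0def]
    · have h' : (i : ℕ) ≠ 0 := fun hh => hi (by rw [hm0def]; exact Fin.ext hh)
      simp [h', Pi.single_apply, hi]
  have hTtw : ∀ q : Fin k, (Tᵀ *ᵥ w) q = t q * w m0 := by
    intro q
    show ∑ i, Tᵀ q i * w i = t q * w m0
    have h1 : ∀ i : Fin m, Tᵀ q i * w i = if i = m0 then t q * w i else 0 := by
      intro i
      rw [hT]
      show (if (i : ℕ) = 0 then t q else 0) * w i = _
      by_cases hi : i = m0
      · subst hi
        simp [hm0def]
      · have h' : (i : ℕ) ≠ 0 := fun hh => hi (by rw [hm0def]; exact Fin.ext hh)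
        simp [h', hi]
    rw [Finset.sum_congr rfl fun i _ => h1 i,
      Finset.sum_ite_eq' Finset.univ m0 fun i => t q * w i]
    simp
  have hres : ∀ p, ((fromBlocks A1 T Tᵀ (Matrix.diagonal d)) *ᵥ x) p - d j * x p
      = Sum.elim (fun _ : Fin m => (0 : ℝ)) (fun q => t q * w m0) p := by
    intro p
    rw [hxdef, fromBlocks_mulVec]
    have hcompl : (Sum.elim w (Pi.single j 1) ∘ Sum.inl : Fin m → ℝ) = w := rfl
    have hcompr : (Sum.elim w (Pi.single j 1) ∘ Sum.inr : Fin k → ℝ) = Pi.single j 1 := rfl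
    cases p with
    | inl i =>
        simp only [Sum.elim_inl, Pi.add_apply]
        rw [hcompl, hcompr, hTsingle i]
        have := htop i
        linarith
    | inr q =>
        simp only [Sum.elim_inr, Pi.add_apply]
        rw [hcompl, hcompr, hTtw q]
        have hdiag : (Matrix.diagonal d *ᵥ Pi.single j 1) q = d j * (Pi.single j 1 : Fin k → ℝ) q := by
          rw [diagonal_mulVec_single]
          simp [Pi.single_apply]
        rw [hdiag]
        ring
  have hεsq : ε ^ 2 = ∑ q, t q ^ 2 := by
    have h1 : ε = Real.sqrt (∑ q, t q ^ 2) := by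
      rw [hεdef]
      simp [euclNorm, Real.norm_eq_abs, sq_abs]
    rw [h1, Real.sq_sqrt (by positivity)]
  have hxsum : 1 ≤ ∑ p, x p ^ 2 := by
    rw [hxdef, Fintype.sum_sum_type]
    simp only [Sum.elim_inl, Sum.elim_inr]
    have h1 : ∑ q, (Pi.single j 1 : Fin k → ℝ) q ^ 2 = 1 := by
      have h5 : ∀ q : Fin k, ((Pi.single j 1 : Fin k → ℝ) q) ^ 2 = if q = j then 1 else 0 := by
        intro q
        simp [Pi.single_apply]
      rw [Finset.sum_congr rfl fun q _ => h5 q,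
        Finset.sum_ite_eq' Finset.univ j fun _ => (1:ℝ)]
      simp
    have h2 : (0 : ℝ) ≤ ∑ i, w i ^ 2 := by positivity
    rw [h1]
    linarith
  have hc0 : 0 ≤ |t j| * ε / g := div_nonneg (mul_nonneg (abs_nonneg _) hε) hg0.le
  have hrsum : ∑ p, (((fromBlocks A1 T Tᵀ (Matrix.diagonal d)) *ᵥ x) p - d j * x p) ^ 2
      ≤ (|t j| * ε / g) ^ 2 := by
    have h1 : ∑ p, (((fromBlocks A1 T Tᵀ (Matrix.diagonal d)) *ᵥ x) p - d j * x p) ^ 2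
        = ∑ p, (Sum.elim (fun _ : Fin m => (0 : ℝ)) (fun q => t q * w m0) p) ^ 2 :=
      Finset.sum_congr rfl fun p _ => by rw [hres p]
    rw [h1, Fintype.sum_sum_type]
    simp only [Sum.elim_inl, Sum.elim_inr]
    have h2 : ∑ q : Fin k, (t q * w m0) ^ 2 = w m0 ^ 2 * ∑ q, t q ^ 2 := by
      rw [Finset.mul_sum]
      exact Finset.sum_congr rfl fun q _ => by ring
    have h3 : w m0 ^ 2 ≤ (|t j| / g) ^ 2 := by
      have := pow_le_pow_left₀ (abs_nonneg (w m0)) hw0 2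
      rwa [sq_abs] at this
    have h4 : (0 : ℝ) ≤ ∑ q, t q ^ 2 := by positivity
    have h5 : w m0 ^ 2 * ∑ q, t q ^ 2 ≤ (|t j| / g) ^ 2 * ∑ q, t q ^ 2 :=
      mul_le_mul_of_nonneg_right h3 h4
    have h6 : (|t j| / g) ^ 2 * ∑ q, t q ^ 2 = (|t j| * ε / g) ^ 2 := by
      rw [← hεsq]
      ring
    simp only [ne_eq, OfNat.ofNat_ne_zero, not_false_eq_true, zero_pow,
      Finset.sum_const_zero, zero_add]
    rw [h2]
    linarith
  haveI : Nonempty (Fin m ⊕ Fin k) := ⟨Sum.inr ⟨0, hk⟩⟩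
  obtain ⟨p, hp⟩ := eig_close_of_residual hAhat x (d j) (|t j| * ε / g) hxsum hc0 hrsum
  set f := hAhat.eigenvalues ∘ (Fintype.equivFin (Fin m ⊕ Fin k)).symm with hfdef
  refine ⟨(Tuple.sort f).symm (Fintype.equivFin (Fin m ⊕ Fin k) p), ?_⟩
  have hith : ithEig hAhat ((Tuple.sort f).symm (Fintype.equivFin (Fin m ⊕ Fin k) p))
      = hAhat.eigenvalues p := by
    rw [ithEig, ← hfdef, Equiv.apply_symm_apply]
    simp [hfdef]
  rw [hith]
  have h1 : ε / g ≤ ε / (g - 2 * ε) :=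
    div_le_div_of_nonneg_left hε (by linarith) (by linarith)
  have hτ0 : 0 ≤ ε / (g - 2 * ε) := div_nonneg hε (by linarith)
  have h3 : 0 ≤ ε * (ε / (g - 2 * ε)) ^ 2 := by positivity
  calc |hAhat.eigenvalues p - d j| ≤ |t j| * ε / g := hp
    _ = |t j| * (ε / g) := by rw [mul_div_assoc]
    _ ≤ |t j| * (ε / (g - 2 * ε)) := mul_le_mul_of_nonneg_left h1 (abs_nonneg _)
    _ ≤ 2 * |t j| * (ε / (g - 2 * ε)) := by nlinarith [abs_nonneg (t j)]
    _ ≤ 2 * |t j| * (ε / (g - 2 * ε)) + ε * (ε / (g - 2 * ε)) ^ 2 := by linarith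
end
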